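/- arXiv:1203.5480 — 4 statements merged into one kernel-verified Lean document; each statement's English description precedes it below -/
import Mathlib

section
/- Let 0 < α ≤ 1 and let f be a strongly bi-starlike function of order α, i.e. f is bi-univalent with inverse extension F and both zf'(z)/f(z) ≺ ((1+z)/(1−z))^α and wF'(w)/F(w) ≺ ((1+w)/(1−w))^α (equivalently, |arg(zf'(z)/f(z))| < απ/2 and |arg(wF'(w)/F(w))| < απ/2 on 𝔻). Then the second Taylor coefficient of f satisfies |a₂| ≤ 2α/√(1+α). -/
open Metric Set Complex

noncomputable section

section helpers
open Filter


private lemma iteratedDeriv_eq_coeff {f : ℂ → ℂ} {p : FormalMultilinearSeries ℂ ℂ ℂ} {x : ℂ}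
    (hp : HasFPowerSeriesAt f p x) (n : ℕ) :
    iteratedDeriv n f x = (n.factorial : ℂ) * p.coeff n := by
  obtain ⟨r, hr⟩ := hp
  have h := (hr.factorial_smul (y := (1:ℂ)) n).symm
  rw [iteratedDeriv_eq_iteratedFDeriv, h, FormalMultilinearSeries.coeff]
  simp [nsmul_eq_mul]

private lemma analyticAt_deriv {u : ℂ → ℂ} {x : ℂ} (hu : AnalyticAt ℂ u x) :
    AnalyticAt ℂ (deriv u) x := by
  have h := hu.eventually_analyticAt
  obtain ⟨s, hsub, hso, hxs⟩ := _root_.mem_nhds_iff.mp h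
  exact (AnalyticOnNhd.deriv (fun y hy => hsub hy)) x hxs

private lemma iteratedDeriv_two {u : ℂ → ℂ} {x : ℂ} :
    iteratedDeriv 2 u x = deriv (deriv u) x := by
  rw [show (2:ℕ) = 1 + 1 from rfl, iteratedDeriv_succ, iteratedDeriv_one]

private lemma iteratedDeriv2_mul {u v : ℂ → ℂ} {x : ℂ}
    (hu : AnalyticAt ℂ u x) (hv : AnalyticAt ℂ v x) :
    iteratedDeriv 2 (fun z => u z * v z) x =
      iteratedDeriv 2 u x * v x + 2 * deriv u x * deriv v x + u x * iteratedDeriv 2 v x := by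
  have hev : deriv (fun z => u z * v z) =ᶠ[nhds x]
      (fun z => deriv u z * v z + u z * deriv v z) := by
    filter_upwards [hu.eventually_analyticAt, hv.eventually_analyticAt] with z hz1 hz2
    exact deriv_mul hz1.differentiableAt hz2.differentiableAt
  have h1 : HasDerivAt (fun z => deriv u z * v z + u z * deriv v z)
      ((deriv (deriv u) x * v x + deriv u x * deriv v x) +
        (deriv u x * deriv v x + u x * deriv (deriv v) x)) x :=
    (((analyticAt_deriv hu).differentiableAt.hasDerivAt.mul hv.differentiableAt.hasDerivAt).add
      (hu.differentiableAt.hasDerivAt.mul (analyticAt_deriv hv).differentiableAt.hasDerivAt))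
  rw [iteratedDeriv_two, hev.deriv_eq, h1.deriv, iteratedDeriv_two, iteratedDeriv_two]
  ring

private lemma iteratedDeriv_dslope {f : ℂ → ℂ} (hf : AnalyticAt ℂ f 0) (n : ℕ) :
    ((n : ℂ) + 1) * iteratedDeriv n (dslope f 0) 0 = iteratedDeriv (n + 1) f 0 := by
  obtain ⟨p, hp⟩ := hf
  have h1 := iteratedDeriv_eq_coeff hp.has_fpower_series_dslope_fslope n
  have h2 := iteratedDeriv_eq_coeff hp (n + 1)
  rw [h1, h2, FormalMultilinearSeries.coeff_fslope, Nat.factorial_succ]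
  push_cast
  ring



private lemma normSq_lt_one {u : ℂ} (h : ‖u‖ < 1) : Complex.normSq u < 1 := by
  have h' : ‖u‖ < 1 := h
  rw [Complex.normSq_eq_norm_sq]
  nlinarith [norm_nonneg u]

private lemma key_ineq {u w : ℂ} (hu : Complex.normSq u < 1) (hw : Complex.normSq w < 1) :
    ‖w - u‖ < ‖1 - (starRingEnd ℂ) u * w‖ := by
  have h : Complex.normSq (1 - (starRingEnd ℂ) u * w) - Complex.normSq (w - u)
      = (1 - Complex.normSq u) * (1 - Complex.normSq w) := by
    simp only [Complex.normSq_apply, Complex.sub_re, Complex.sub_im, Complex.mul_re,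
      Complex.mul_im, Complex.one_re, Complex.one_im, Complex.conj_re, Complex.conj_im]
    ring
  have hpos : 0 < Complex.normSq (1 - (starRingEnd ℂ) u * w) - Complex.normSq (w - u) := by
    rw [h]; exact mul_pos (by linarith) (by linarith)
  rw [Complex.norm_def, Complex.norm_def]
  exact Real.sqrt_lt_sqrt (Complex.normSq_nonneg _) (by linarith)

private lemma schwarz_pick_center {ψ : ℂ → ℂ} (hd : DifferentiableOn ℂ ψ (ball 0 1))
    (hb : ∀ z ∈ ball (0:ℂ) 1, ‖ψ z‖ ≤ 1) :
    ‖deriv ψ 0‖ ≤ 1 - ‖ψ 0‖ ^ 2 := by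
  have h0mem : (0:ℂ) ∈ ball (0:ℂ) 1 := by simp
  by_cases hone : ∃ z₀ ∈ ball (0:ℂ) 1, 1 ≤ ‖ψ z₀‖
  · obtain ⟨z₀, hz₀, h1⟩ := hone
    have hmax : IsMaxOn (norm ∘ ψ) (ball (0:ℂ) 1) z₀ := fun z hz => (hb z hz).trans h1
    have heq : EqOn ψ (Function.const ℂ (ψ z₀)) (ball (0:ℂ) 1) :=
      Complex.eqOn_of_isPreconnected_of_isMaxOn_norm (convex_ball _ _).isPreconnected
        isOpen_ball hd hz₀ hmax
    have hev : ψ =ᶠ[nhds 0] Function.const ℂ (ψ z₀) :=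
      heq.eventuallyEq_of_mem (isOpen_ball.mem_nhds h0mem)
    have hd0 : deriv ψ 0 = 0 := by rw [hev.deriv_eq]; exact deriv_const _ _
    have hψ0 : ‖ψ 0‖ = 1 := le_antisymm (hb 0 h0mem) (by rw [heq h0mem]; exact h1)
    rw [hd0, hψ0]; simp
  · push_neg at hone
    set u := ψ 0 with hu
    have hulit : ‖u‖ < 1 := hone 0 h0mem
    have hunsq : Complex.normSq u < 1 := normSq_lt_one hulit
    have hden : ∀ z ∈ ball (0:ℂ) 1, (1 - (starRingEnd ℂ) u * ψ z) ≠ 0 := by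
      intro z hz
      have hlt : ‖(starRingEnd ℂ) u * ψ z‖ < 1 := by
        rw [norm_mul, RCLike.norm_conj]
        calc ‖u‖ * ‖ψ z‖ ≤ ‖u‖ * 1 := mul_le_mul_of_nonneg_left (hb z hz) (norm_nonneg _)
          _ < 1 := by simpa using hulit
      intro hcon
      rw [sub_eq_zero] at hcon
      rw [← hcon] at hlt
      simp at hlt
    set χ : ℂ → ℂ := fun z => (ψ z - u) * (1 - (starRingEnd ℂ) u * ψ z)⁻¹ with hχ
    have hχd : DifferentiableOn ℂ χ (ball 0 1) := by
      apply DifferentiableOn.mul (hd.sub_const u)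
      exact DifferentiableOn.inv ((differentiableOn_const _).sub
        ((differentiableOn_const _).mul hd)) hden
    have hχ0 : χ 0 = 0 := by simp [hχ, ← hu]
    have hmaps : MapsTo χ (ball (0:ℂ) 1) (ball (χ 0) 1) := by
      intro z hz
      rw [hχ0, mem_ball_zero_iff]
      have hk := key_ineq hunsq (normSq_lt_one (hone z hz))
      have hpos : 0 < ‖1 - (starRingEnd ℂ) u * ψ z‖ := norm_pos_iff.mpr (hden z hz)
      have h2 := (div_lt_one hpos).mpr hk
      rw [div_eq_mul_inv] at h2
      simpa [hχ, norm_mul, norm_inv] using h2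
    have hSch := Complex.norm_deriv_le_div_of_mapsTo_ball hχd (hmaps.mono_right ball_subset_closedBall) one_pos
    -- compute deriv χ 0
    have hψ0d : HasDerivAt ψ (deriv ψ 0) 0 :=
      (hd.differentiableAt (isOpen_ball.mem_nhds h0mem)).hasDerivAt
    have hden0 : (1 - (starRingEnd ℂ) u * ψ 0) ≠ 0 := hden 0 h0mem
    have h2 : HasDerivAt (fun z => 1 - (starRingEnd ℂ) u * ψ z)
        (-((starRingEnd ℂ) u * deriv ψ 0)) 0 := by
      simpa using ((hψ0d.const_mul ((starRingEnd ℂ) u)).const_sub 1)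
    have h3 := h2.inv hden0
    have hχd0 : HasDerivAt χ
        (deriv ψ 0 * (1 - (starRingEnd ℂ) u * ψ 0)⁻¹ +
          (ψ 0 - u) * (-(-((starRingEnd ℂ) u * deriv ψ 0)) / (1 - (starRingEnd ℂ) u * ψ 0) ^ 2)) 0 :=
      (hψ0d.sub_const u).mul h3
    have hχval : deriv χ 0 = deriv ψ 0 * (1 - (starRingEnd ℂ) u * u)⁻¹ := by
      rw [hχd0.deriv, ← hu]
      simp
    rw [hχval] at hSch
    have hcu : (starRingEnd ℂ) u * u = (Complex.normSq u : ℂ) := by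
      rw [mul_comm, Complex.mul_conj]
    rw [hcu] at hSch
    have hnorm : ‖(1 - (Complex.normSq u : ℂ))⁻¹‖ = (1 - Complex.normSq u)⁻¹ := by
      rw [norm_inv]
      congr 1
      rw [show (1 - (Complex.normSq u : ℂ)) = ((1 - Complex.normSq u : ℝ) : ℂ) by push_cast; ring,
        Complex.norm_real, Real.norm_eq_abs, abs_of_pos (by linarith)]
    rw [norm_mul, hnorm] at hSch
    have hfin : ‖deriv ψ 0‖ ≤ 1 - Complex.normSq u := by
      have hp : 0 < 1 - Complex.normSq u := by linarith
      calc ‖deriv ψ 0‖ = ‖deriv ψ 0‖ * (1 - Complex.normSq u)⁻¹ * (1 - Complex.normSq u) := by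
            field_simp
        _ ≤ (1 / 1) * (1 - Complex.normSq u) := mul_le_mul_of_nonneg_right hSch hp.le
        _ = 1 - Complex.normSq u := by ring
    have hsq : Complex.normSq u = ‖u‖ ^ 2 := by
      rw [Complex.normSq_eq_norm_sq]
    linarith [hfin, hsq.le, hsq.ge]

private lemma iteratedDeriv2_comp {φ f : ℂ → ℂ} {x : ℂ}
    (hφ : AnalyticAt ℂ φ (f x)) (hf : AnalyticAt ℂ f x) :
    iteratedDeriv 2 (fun z => φ (f z)) x =
      iteratedDeriv 2 φ (f x) * (deriv f x) ^ 2 + deriv φ (f x) * iteratedDeriv 2 f x := by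
  have hev : deriv (fun z => φ (f z)) =ᶠ[nhds x]
      (fun z => deriv φ (f z) * deriv f z) := by
    filter_upwards [hf.eventually_analyticAt,
      hf.differentiableAt.continuousAt.tendsto.eventually hφ.eventually_analyticAt]
      with z hz1 hz2
    exact deriv_comp z hz2.differentiableAt hz1.differentiableAt
  have h1 : HasDerivAt (fun z => deriv φ (f z) * deriv f z)
      ((deriv (deriv φ) (f x) * deriv f x) * deriv f x +
        deriv φ (f x) * deriv (deriv f) x) x := by
    exact (((analyticAt_deriv hφ).differentiableAt.hasDerivAt.comp x
      hf.differentiableAt.hasDerivAt).mul (analyticAt_deriv hf).differentiableAt.hasDerivAt)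
  rw [iteratedDeriv_two, hev.deriv_eq, h1.deriv, iteratedDeriv_two, iteratedDeriv_two]
  ring

private lemma re_cpow_pos {w : ℂ} {t : ℝ} (hw : w ≠ 0) (ht : |w.arg * t| < Real.pi / 2) :
    0 < (w ^ ((t : ℝ) : ℂ)).re := by
  rw [Complex.cpow_def_of_ne_zero hw, Complex.exp_re]
  apply mul_pos (Real.exp_pos _)
  have him : (Complex.log w * ((t : ℝ) : ℂ)).im = w.arg * t := by
    simp [Complex.mul_im, Complex.log_im]
  rw [him]
  have h2 := abs_lt.mp ht
  exact Real.cos_pos_of_mem_Ioo ⟨by linarith [h2.1], by linarith [h2.2]⟩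

private lemma mobius_lt_one {w : ℂ} (hw : 0 < w.re) : ‖(w - 1) * (w + 1)⁻¹‖ < 1 := by
  have hne : w + 1 ≠ 0 := by
    intro hcon
    have : (w + 1).re = 0 := by rw [hcon]; simp
    simp only [Complex.add_re, Complex.one_re] at this
    linarith
  have h : Complex.normSq (w + 1) - Complex.normSq (w - 1) = 4 * w.re := by
    simp only [Complex.normSq_apply, Complex.add_re, Complex.add_im, Complex.sub_re,
      Complex.sub_im, Complex.one_re, Complex.one_im]
    ring
  have hlt : ‖w - 1‖ < ‖w + 1‖ := by
    rw [Complex.norm_def, Complex.norm_def]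
    exact Real.sqrt_lt_sqrt (Complex.normSq_nonneg _) (by linarith)
  have hpos : 0 < ‖w + 1‖ := norm_pos_iff.mpr hne
  have h2 := (div_lt_one hpos).mpr hlt
  rw [div_eq_mul_inv] at h2
  simpa [norm_mul, norm_inv] using h2

private lemma side_lemma (α : ℝ) (hα0 : 0 < α) (hα1 : α ≤ 1)
    (f : ℂ → ℂ)
    (hf : DifferentiableOn ℂ f (ball 0 1)) (hf0 : f 0 = 0) (hf1 : deriv f 0 = 1)
    (hfi : InjOn f (ball 0 1))
    (g : ℂ → ℂ) (hg0 : g 0 = 1)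
    (hgf : ∀ z ∈ ball (0 : ℂ) 1, z ≠ 0 → g z = z * deriv f z / f z)
    (hgarg : ∀ z ∈ ball (0 : ℂ) 1, g z ≠ 0 ∧ |Complex.arg (g z)| < α * Real.pi / 2) :
    deriv g 0 = iteratedDeriv 2 f 0 / 2 ∧
    6 * iteratedDeriv 2 g 0 = 4 * iteratedDeriv 3 f 0 - 3 * (iteratedDeriv 2 f 0) ^ 2 ∧
    ‖iteratedDeriv 2 g 0 - (deriv g 0) ^ 2‖ ≤ 4 * α - ‖deriv g 0‖ ^ 2 / α := by
  have h0mem : (0:ℂ) ∈ ball (0:ℂ) 1 := by simp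
  have hπ := Real.pi_pos
  have hfa : AnalyticOnNhd ℂ f (ball 0 1) := hf.analyticOnNhd isOpen_ball
  have hfa0 : AnalyticAt ℂ f 0 := hfa 0 h0mem
  have hfz : ∀ z ∈ ball (0:ℂ) 1, z ≠ 0 → f z ≠ 0 := by
    intro z hz hz0 hcon
    exact hz0 (hfi hz h0mem (by rw [hcon, hf0]))
  set h : ℂ → ℂ := dslope f 0 with hh
  have hh0 : h 0 = 1 := by rw [hh, dslope_same]; exact hf1
  have hhan : AnalyticAt ℂ h 0 := by
    obtain ⟨p, hp⟩ := hfa0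
    exact hp.has_fpower_series_dslope_fslope.analyticAt
  have hhd : DifferentiableOn ℂ h (ball 0 1) := by
    intro z hz
    rcases eq_or_ne z 0 with rfl | hne
    · exact hhan.differentiableAt.differentiableWithinAt
    · exact ((differentiableAt_dslope_of_ne hne).2
        (hf.differentiableAt (isOpen_ball.mem_nhds hz))).differentiableWithinAt
  have hhne : ∀ z ∈ ball (0:ℂ) 1, h z ≠ 0 := by
    intro z hz
    rcases eq_or_ne z 0 with rfl | hne
    · rw [hh0]; exact one_ne_zero
    · rw [hh, dslope_of_ne _ hne, slope_def_field, hf0, sub_zero, sub_zero]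
      exact div_ne_zero (hfz z hz hne) hne
  have hda : AnalyticOnNhd ℂ (deriv f) (ball 0 1) := hfa.deriv
  have hgh : EqOn g (fun z => deriv f z * (h z)⁻¹) (ball (0:ℂ) 1) := by
    intro z hz
    rcases eq_or_ne z 0 with rfl | hne
    · simp [hg0, hh0, hf1]
    · show g z = deriv f z * (h z)⁻¹
      rw [hgf z hz hne, hh, dslope_of_ne _ hne, slope_def_field, hf0, sub_zero, sub_zero]
      field_simp
  have hq : DifferentiableOn ℂ (fun z => deriv f z * (h z)⁻¹) (ball 0 1) :=
    DifferentiableOn.mul (fun z hz => (hda z hz).differentiableAt.differentiableWithinAt)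
      (hhd.inv hhne)
  have hgd : DifferentiableOn ℂ g (ball 0 1) := DifferentiableOn.congr hq hgh
  have hga : AnalyticAt ℂ g 0 := by
    rw [analyticAt_iff_eventually_differentiableAt]
    filter_upwards [isOpen_ball.mem_nhds h0mem] with z hz
    exact hgd.differentiableAt (isOpen_ball.mem_nhds hz)
  have hgmul : (fun z => g z * h z) =ᶠ[nhds 0] deriv f := by
    apply Filter.eventuallyEq_of_mem (isOpen_ball.mem_nhds h0mem)
    intro z hz
    show g z * h z = deriv f z
    rw [hgh hz]
    field_simp [hhne z hz]
  -- first derivative of h at 0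
  have hd1 := iteratedDeriv_dslope hfa0 1
  rw [iteratedDeriv_one] at hd1
  push_cast at hd1
  have hh'0 : deriv h 0 = iteratedDeriv 2 f 0 / 2 := by
    rw [hh]
    field_simp
    linear_combination hd1
  have hd2 := iteratedDeriv_dslope hfa0 2
  push_cast at hd2
  have hh''0 : iteratedDeriv 2 h 0 = iteratedDeriv 3 f 0 / 3 := by
    rw [hh]
    field_simp
    linear_combination hd2
  -- identity A
  have hA : deriv g 0 = iteratedDeriv 2 f 0 / 2 := by
    have e1 : deriv (fun z => g z * h z) 0 = deriv (deriv f) 0 := hgmul.deriv_eq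
    rw [deriv_fun_mul hga.differentiableAt hhan.differentiableAt, hg0, hh0, hh'0,
      ← iteratedDeriv_two] at e1
    linear_combination e1
  -- identity B
  have hB : 6 * iteratedDeriv 2 g 0 =
      4 * iteratedDeriv 3 f 0 - 3 * (iteratedDeriv 2 f 0) ^ 2 := by
    have e2 : iteratedDeriv 2 (fun z => g z * h z) 0 = iteratedDeriv 2 (deriv f) 0 := by
      rw [iteratedDeriv_two, iteratedDeriv_two]
      exact (hgmul.deriv).deriv_eq
    rw [iteratedDeriv2_mul hga hhan, hg0, hh0, hh'0, hh''0, hA,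
      ← iteratedDeriv_succ'] at e2
    linear_combination 6 * e2
  refine ⟨hA, hB, ?_⟩
  -- subordination argument
  set t : ℝ := α⁻¹ with ht
  have htpos : 0 < t := inv_pos.mpr hα0
  have hre : ∀ z ∈ ball (0:ℂ) 1, 0 < (g z).re := by
    intro z hz
    obtain ⟨hne, harg⟩ := hgarg z hz
    have hlt : |Complex.arg (g z)| < Real.pi / 2 := lt_of_lt_of_le harg (by nlinarith)
    rcases Complex.abs_arg_lt_pi_div_two_iff.mp hlt with hgood | hbad
    · exact hgood
    · exact absurd hbad hne
  have hslit : ∀ z ∈ ball (0:ℂ) 1, g z ∈ Complex.slitPlane := fun z hz =>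
    Complex.mem_slitPlane_iff.mpr (Or.inl (hre z hz))
  set φ : ℂ → ℂ := fun z => g z ^ ((t : ℝ) : ℂ) with hφ
  have hφre : ∀ z ∈ ball (0:ℂ) 1, 0 < (φ z).re := by
    intro z hz
    apply re_cpow_pos (hgarg z hz).1
    have harg := (hgarg z hz).2
    have h1 : |Complex.arg (g z) * t| = |Complex.arg (g z)| * t := by
      rw [abs_mul, abs_of_pos htpos]
    rw [h1]
    calc |Complex.arg (g z)| * t < (α * Real.pi / 2) * t :=
          mul_lt_mul_of_pos_right harg htpos
      _ = Real.pi / 2 := by rw [ht]; field_simp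
  have hφdz : ∀ z ∈ ball (0:ℂ) 1, HasDerivAt φ
      (((t:ℝ):ℂ) * g z ^ (((t:ℝ):ℂ) - 1) * deriv g z) z := by
    intro z hz
    exact HasDerivAt.cpow_const
      ((hgd.differentiableAt (isOpen_ball.mem_nhds hz)).hasDerivAt) (hslit z hz)
  have hφd : DifferentiableOn ℂ φ (ball 0 1) := fun z hz =>
    ((hφdz z hz).differentiableAt).differentiableWithinAt
  have hφ0 : φ 0 = 1 := by rw [hφ]; simp [hg0]
  have hφan : AnalyticAt ℂ φ 0 := by
    rw [analyticAt_iff_eventually_differentiableAt]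
    filter_upwards [isOpen_ball.mem_nhds h0mem] with z hz
    exact (hφdz z hz).differentiableAt
  have hφ1ne : ∀ z ∈ ball (0:ℂ) 1, φ z + 1 ≠ 0 := by
    intro z hz hcon
    have h1 : (φ z + 1).re = (φ z).re + 1 := by simp
    rw [hcon] at h1
    simp only [Complex.zero_re] at h1
    linarith [hφre z hz]
  set ω : ℂ → ℂ := fun z => (φ z - 1) * (φ z + 1)⁻¹ with hω
  have hωd : DifferentiableOn ℂ ω (ball 0 1) :=
    (hφd.sub_const 1).mul ((hφd.add_const 1).inv hφ1ne)
  have hω0 : ω 0 = 0 := by rw [hω]; simp [hφ0]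
  have hmaps : MapsTo ω (ball (0:ℂ) 1) (ball (ω 0) 1) := by
    intro z hz
    rw [hω0, mem_ball_zero_iff]
    exact mobius_lt_one (hφre z hz)
  set ψ : ℂ → ℂ := dslope ω 0 with hψ
  have hωan : AnalyticAt ℂ ω 0 := by
    rw [analyticAt_iff_eventually_differentiableAt]
    filter_upwards [isOpen_ball.mem_nhds h0mem] with z hz
    exact hωd.differentiableAt (isOpen_ball.mem_nhds hz)
  have hψd : DifferentiableOn ℂ ψ (ball 0 1) := by
    intro z hz
    rcases eq_or_ne z 0 with rfl | hne
    · obtain ⟨p, hp⟩ := hωan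
      exact hp.has_fpower_series_dslope_fslope.analyticAt.differentiableAt.differentiableWithinAt
    · exact ((differentiableAt_dslope_of_ne hne).2
        (hωd.differentiableAt (isOpen_ball.mem_nhds hz))).differentiableWithinAt
  have hψb : ∀ z ∈ ball (0:ℂ) 1, ‖ψ z‖ ≤ 1 := by
    intro z hz
    have hone := Complex.norm_dslope_le_div_of_mapsTo_ball hωd (hmaps.mono_right ball_subset_closedBall) hz
    rw [hψ]
    simpa using hone
  have hSP := schwarz_pick_center hψd hψb
  -- derivative of φ at 0
  have hφda : HasDerivAt φ (deriv φ 0) 0 := (hφdz 0 h0mem).differentiableAt.hasDerivAt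
  have hDφ : deriv φ 0 = ((t:ℝ):ℂ) * deriv g 0 := by
    rw [(hφdz 0 h0mem).deriv, hg0, one_cpow, mul_one]
  have hφev : deriv φ =ᶠ[nhds 0]
      (fun z => ((t:ℝ):ℂ) * g z ^ (((t:ℝ):ℂ) - 1) * deriv g z) :=
    Filter.eventuallyEq_of_mem (isOpen_ball.mem_nhds h0mem) fun z hz => (hφdz z hz).deriv
  have hgda : HasDerivAt (deriv g) (deriv (deriv g) 0) 0 :=
    (analyticAt_deriv hga).differentiableAt.hasDerivAt
  have hcp : HasDerivAt (fun z => g z ^ (((t:ℝ):ℂ) - 1))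
      ((((t:ℝ):ℂ) - 1) * g 0 ^ ((((t:ℝ):ℂ) - 1) - 1) * deriv g 0) 0 :=
    HasDerivAt.cpow_const (hga.differentiableAt.hasDerivAt) (hslit 0 h0mem)
  have hprod : HasDerivAt (fun z => ((t:ℝ):ℂ) * g z ^ (((t:ℝ):ℂ) - 1) * deriv g z)
      ((((t:ℝ):ℂ) * ((((t:ℝ):ℂ) - 1) * g 0 ^ ((((t:ℝ):ℂ) - 1) - 1) * deriv g 0)) * deriv g 0
        + (((t:ℝ):ℂ) * g 0 ^ (((t:ℝ):ℂ) - 1)) * deriv (deriv g) 0) 0 :=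
    (hcp.const_mul _).mul hgda
  have hφ'' : iteratedDeriv 2 φ 0 = ((t:ℝ):ℂ) * (((t:ℝ):ℂ) - 1) * (deriv g 0) ^ 2
      + ((t:ℝ):ℂ) * iteratedDeriv 2 g 0 := by
    rw [iteratedDeriv_two, hφev.deriv_eq, hprod.deriv, hg0, one_cpow, iteratedDeriv_two]
    rw [one_cpow]
    ring
  -- derivative of ω at 0
  have hinv : HasDerivAt (fun z => (φ z + 1)⁻¹) (-(deriv φ 0) / (φ 0 + 1) ^ 2) 0 :=
    (hφda.add_const 1).inv (hφ1ne 0 h0mem)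
  have hω'at : HasDerivAt ω
      (deriv φ 0 * (φ 0 + 1)⁻¹ + (φ 0 - 1) * (-(deriv φ 0) / (φ 0 + 1) ^ 2)) 0 :=
    (hφda.sub_const 1).mul hinv
  have hω'0 : deriv ω 0 = deriv φ 0 / 2 := by
    rw [hω'at.deriv, hφ0]
    ring
  -- second derivative of ω at 0
  have hωev : deriv ω =ᶠ[nhds 0] (fun z =>
      deriv φ z * (φ z + 1)⁻¹ + (φ z - 1) * (-(deriv φ z) / (φ z + 1) ^ 2)) := by
    apply Filter.eventuallyEq_of_mem (isOpen_ball.mem_nhds h0mem)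
    intro z hz
    have hφz : HasDerivAt φ (deriv φ z) z := ((hφdz z hz).differentiableAt).hasDerivAt
    have h2 : HasDerivAt (fun w => (φ w + 1)⁻¹) (-(deriv φ z) / (φ z + 1) ^ 2) z :=
      (hφz.add_const 1).inv (hφ1ne z hz)
    exact ((hφz.sub_const 1).mul h2).deriv
  have hdφa : HasDerivAt (deriv φ) (iteratedDeriv 2 φ 0) 0 := by
    rw [iteratedDeriv_two]
    exact (analyticAt_deriv hφan).differentiableAt.hasDerivAt
  have hA' : HasDerivAt (fun z => deriv φ z * (φ z + 1)⁻¹)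
      (iteratedDeriv 2 φ 0 * (φ 0 + 1)⁻¹ + deriv φ 0 * (-(deriv φ 0) / (φ 0 + 1) ^ 2)) 0 :=
    hdφa.mul hinv
  have hden2 : HasDerivAt (fun z => (φ z + 1) ^ 2) (2 * (φ 0 + 1) ^ 1 * deriv φ 0) 0 := by
    have := (hφda.add_const 1).pow 2
    norm_num at this ⊢
    exact this
  have hC : HasDerivAt (fun z => -(deriv φ z) / (φ z + 1) ^ 2)
      ((-(iteratedDeriv 2 φ 0) * (φ 0 + 1) ^ 2 -
        (-(deriv φ 0)) * (2 * (φ 0 + 1) ^ 1 * deriv φ 0)) / ((φ 0 + 1) ^ 2) ^ 2) 0 :=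
    (hdφa.neg).div hden2 (pow_ne_zero 2 (hφ1ne 0 h0mem))
  have hB' : HasDerivAt (fun z => (φ z - 1) * (-(deriv φ z) / (φ z + 1) ^ 2))
      (deriv φ 0 * (-(deriv φ 0) / (φ 0 + 1) ^ 2) +
        (φ 0 - 1) * ((-(iteratedDeriv 2 φ 0) * (φ 0 + 1) ^ 2 -
          (-(deriv φ 0)) * (2 * (φ 0 + 1) ^ 1 * deriv φ 0)) / ((φ 0 + 1) ^ 2) ^ 2)) 0 :=
    (hφda.sub_const 1).mul hC
  have hω'' : iteratedDeriv 2 ω 0 = (iteratedDeriv 2 φ 0 - (deriv φ 0) ^ 2) / 2 := by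
    rw [iteratedDeriv_two, hωev.deriv_eq, (hA'.fun_add hB').deriv, hφ0]
    ring
  -- ψ values
  have hψ0 : ψ 0 = deriv ω 0 := by rw [hψ, dslope_same]
  have hψ'0 : 2 * deriv ψ 0 = iteratedDeriv 2 ω 0 := by
    have hiter := iteratedDeriv_dslope hωan 1
    rw [iteratedDeriv_one] at hiter
    push_cast at hiter
    rw [hψ]
    linear_combination hiter
  set S : ℂ := iteratedDeriv 2 g 0 - (deriv g 0) ^ 2 with hSdef
  have hc2 : deriv ψ 0 = ((t:ℝ):ℂ) * S / 4 := by
    rw [hSdef]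
    have e := hψ'0
    rw [hω'', hφ'', hDφ] at e
    linear_combination e / 2
  have hc1 : ψ 0 = ((t:ℝ):ℂ) * deriv g 0 / 2 := by
    rw [hψ0, hω'0, hDφ]
  have hn2 : ‖deriv ψ 0‖ = t * ‖S‖ / 4 := by
    rw [hc2, ht]
    simp only [norm_mul, norm_div, Complex.norm_real, Real.norm_eq_abs]
    rw [abs_of_pos (inv_pos.mpr hα0)]
    norm_num
  have hn1 : ‖ψ 0‖ = t * ‖deriv g 0‖ / 2 := by
    rw [hc1, ht]
    simp only [norm_mul, norm_div, Complex.norm_real, Real.norm_eq_abs]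
    rw [abs_of_pos (inv_pos.mpr hα0)]
    norm_num
  rw [hn1, hn2] at hSP
  have htα : t * α = 1 := by rw [ht]; exact inv_mul_cancel₀ hα0.ne'
  calc ‖S‖ = 4 * α * (t * ‖S‖ / 4) := by
        rw [ht]
        field_simp
    _ ≤ 4 * α * (1 - (t * ‖deriv g 0‖ / 2) ^ 2) :=
        mul_le_mul_of_nonneg_left hSP (by positivity)
    _ = 4 * α - ‖deriv g 0‖ ^ 2 / α := by
        rw [ht]
        field_simp
        ring

end helpers

theorem stmt7 (α : ℝ) (hα0 : 0 < α) (hα1 : α ≤ 1)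
    (f F : ℂ → ℂ)
    (hf : DifferentiableOn ℂ f (ball 0 1)) (hf0 : f 0 = 0) (hf1 : deriv f 0 = 1)
    (hfi : InjOn f (ball 0 1))
    (hF : DifferentiableOn ℂ F (ball 0 1)) (hF0 : F 0 = 0) (hFi : InjOn F (ball 0 1))
    (hFf : ∀ᶠ z in nhds (0 : ℂ), F (f z) = z)
    (g : ℂ → ℂ) (hg0 : g 0 = 1)
    (hgf : ∀ z ∈ ball (0 : ℂ) 1, z ≠ 0 → g z = z * deriv f z / f z)
    (hgarg : ∀ z ∈ ball (0 : ℂ) 1, g z ≠ 0 ∧ |Complex.arg (g z)| < α * Real.pi / 2)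
    (G : ℂ → ℂ) (hG0 : G 0 = 1)
    (hGF : ∀ w ∈ ball (0 : ℂ) 1, w ≠ 0 → G w = w * deriv F w / F w)
    (hGarg : ∀ w ∈ ball (0 : ℂ) 1, G w ≠ 0 ∧ |Complex.arg (G w)| < α * Real.pi / 2) :
    ‖iteratedDeriv 2 f 0 / 2‖ ≤ 2 * α / Real.sqrt (1 + α) := by
  have h0mem : (0:ℂ) ∈ ball (0:ℂ) 1 := by simp
  have hfa : AnalyticOnNhd ℂ f (ball 0 1) := hf.analyticOnNhd isOpen_ball
  have hFa : AnalyticOnNhd ℂ F (ball 0 1) := hF.analyticOnNhd isOpen_ball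
  have hfa0 : AnalyticAt ℂ f 0 := hfa 0 h0mem
  have hFa0 : AnalyticAt ℂ F 0 := hFa 0 h0mem
  have hFaf0 : AnalyticAt ℂ F (f 0) := by rw [hf0]; exact hFa0
  -- chain rule identities
  have hfballs : ∀ᶠ z in nhds (0:ℂ), f z ∈ ball (0:ℂ) 1 := by
    have hc : Filter.Tendsto f (nhds 0) (nhds (0:ℂ)) := by
      have := hfa0.differentiableAt.continuousAt.tendsto
      rwa [hf0] at this
    exact hc (isOpen_ball.mem_nhds h0mem)
  have E1 : (fun z => deriv F (f z) * deriv f z) =ᶠ[nhds (0:ℂ)] (fun _ => (1:ℂ)) := by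
    have h1 : (fun z => F (f z)) =ᶠ[nhds (0:ℂ)] (fun z => z) := hFf
    have h2 := h1.deriv
    filter_upwards [h2, hfballs, isOpen_ball.eventually_mem h0mem] with z hz hzb hzball
    have hdF : DifferentiableAt ℂ F (f z) := (hFa _ hzb).differentiableAt
    have hdf : DifferentiableAt ℂ f z := (hfa _ hzball).differentiableAt
    rw [← deriv_comp z hdF hdf]
    show deriv (F ∘ f) z = 1
    have : deriv (fun z => F (f z)) z = deriv (fun z : ℂ => z) z := hz
    rw [show (F ∘ f) = fun z => F (f z) from rfl, this]
    simp
  have hF1 : deriv F 0 = 1 := by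
    have h := E1.eq_of_nhds
    simp only [hf0, hf1, mul_one] at h
    exact h
  -- u = deriv F ∘ f
  have hu : AnalyticAt ℂ (fun z => deriv F (f z)) 0 :=
    (analyticAt_deriv hFaf0).comp hfa0
  have hdfa : AnalyticAt ℂ (deriv f) 0 := analyticAt_deriv hfa0
  have hu0 : deriv F (f 0) = 1 := by rw [hf0]; exact hF1
  have hu'0 : deriv (fun z => deriv F (f z)) 0 = deriv (deriv F) 0 := by
    rw [show (fun z => deriv F (f z)) = (deriv F ∘ f) from rfl,
      deriv_comp 0 (analyticAt_deriv hFaf0).differentiableAt hfa0.differentiableAt, hf1,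
      mul_one, hf0]
  have E2 : deriv (fun z => deriv F (f z) * deriv f z) 0 = 0 := by
    rw [E1.deriv_eq]
    exact deriv_const _ _
  have hI2F : iteratedDeriv 2 F 0 = - iteratedDeriv 2 f 0 := by
    rw [deriv_fun_mul hu.differentiableAt hdfa.differentiableAt] at E2
    simp only [hu'0, hf0, hF1, hf1, mul_one, one_mul] at E2
    rw [iteratedDeriv_two, iteratedDeriv_two]
    linear_combination E2
  have E3 : iteratedDeriv 2 (fun z => deriv F (f z) * deriv f z) 0 = 0 := by
    rw [iteratedDeriv_two, (E1.deriv).deriv_eq]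
    simp
  have hI3F : iteratedDeriv 3 F 0 = 3 * (iteratedDeriv 2 f 0) ^ 2 - iteratedDeriv 3 f 0 := by
    rw [iteratedDeriv2_mul hu hdfa, iteratedDeriv2_comp (analyticAt_deriv hFaf0) hfa0] at E3
    simp only [hu'0, hf0, hF1, hf1, mul_one, one_mul, one_pow] at E3
    have e1 : iteratedDeriv 2 (deriv F) 0 = iteratedDeriv 3 F 0 := by
      rw [← iteratedDeriv_succ']
    have e2 : iteratedDeriv 2 (deriv f) 0 = iteratedDeriv 3 f 0 := by
      rw [← iteratedDeriv_succ']
    have e3 : deriv (deriv F) 0 = iteratedDeriv 2 F 0 := iteratedDeriv_two.symm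
    have e4 : deriv (deriv f) 0 = iteratedDeriv 2 f 0 := iteratedDeriv_two.symm
    rw [e1, e2, e3, e4, hI2F] at E3
    linear_combination E3
  -- apply side lemma to both functions
  obtain ⟨hA1, hB1, hN1⟩ := side_lemma α hα0 hα1 f hf hf0 hf1 hfi g hg0 hgf hgarg
  obtain ⟨hA2, hB2, hN2⟩ := side_lemma α hα0 hα1 F hF hF0 hF1 hFi G hG0 hGF hGarg
  set a : ℂ := iteratedDeriv 2 f 0 / 2 with ha
  have hb1 : deriv g 0 = a := hA1
  have hB1' : deriv G 0 = -a := by rw [hA2, hI2F, ha]; ring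
  have hsum : (iteratedDeriv 2 g 0 - (deriv g 0) ^ 2) +
      (iteratedDeriv 2 G 0 - (deriv G 0) ^ 2) = 2 * a ^ 2 := by
    rw [hb1, hB1']
    have h6 : (6:ℂ) ≠ 0 := by norm_num
    have hx := hB1
    have hy := hB2
    rw [hI2F, hI3F] at hy
    have haI : iteratedDeriv 2 f 0 = 2 * a := by rw [ha]; ring
    rw [haI] at hx hy
    linear_combination (hx + hy) / 6
  -- norms
  set m : ℝ := ‖a‖ with hm
  have hnorms : 2 * m ^ 2 + 2 * (m ^ 2 / α) ≤ 8 * α := by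
    have h1 : ‖(2:ℂ) * a ^ 2‖ = 2 * m ^ 2 := by
      rw [norm_mul, norm_pow, hm]
      norm_num
    have h2 : ‖(iteratedDeriv 2 g 0 - (deriv g 0) ^ 2) +
        (iteratedDeriv 2 G 0 - (deriv G 0) ^ 2)‖ ≤
        (4 * α - ‖deriv g 0‖ ^ 2 / α) + (4 * α - ‖deriv G 0‖ ^ 2 / α) :=
      le_trans (norm_add_le _ _) (add_le_add hN1 hN2)
    rw [hsum, h1] at h2
    rw [hb1, hB1', norm_neg] at h2
    rw [← hm] at h2
    linarith
  have hm2 : m ^ 2 * (1 + α) ≤ 4 * α ^ 2 := by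
    have h' : (2 * m ^ 2 + 2 * (m ^ 2 / α)) * α ≤ 8 * α * α :=
      mul_le_mul_of_nonneg_right hnorms hα0.le
    have hexp : (2 * m ^ 2 + 2 * (m ^ 2 / α)) * α = 2 * m ^ 2 * α + 2 * m ^ 2 := by
      field_simp
    rw [hexp] at h'
    nlinarith [h']
  -- conclude
  have h1α : (0:ℝ) < 1 + α := by linarith
  have hgoal : ‖iteratedDeriv 2 f 0 / 2‖ = m := by
    rw [hm, ha]
  have hmnn : 0 ≤ m := norm_nonneg _
  have hs : 0 < Real.sqrt (1 + α) := Real.sqrt_pos.mpr h1α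
  rw [le_div_iff₀ hs]
  have h2 : (m * Real.sqrt (1 + α)) ^ 2 ≤ (2 * α) ^ 2 := by
    rw [mul_pow, Real.sq_sqrt h1α.le]
    nlinarith [hm2]
  have hmn : 0 ≤ m * Real.sqrt (1 + α) := by positivity
  nlinarith [h2, hmn, hα0]
end
end

section
/- Let f be a bi-univalent function of the class K_σ(φ), i.e. f is bi-univalent with inverse extension F and both 1 + zf''(z)/f'(z) ≺ φ(z) and 1 + wF''(w)/F'(w) ≺ φ(w). Then the third Taylor coefficient of f satisfies |a₃| ≤ min{ (B₁² + B₁ + |B₂ − B₁|)/6, B₁(3B₁ + 2)/12 }. -/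
open Metric Set Complex

noncomputable section

/-- `g` is subordinate to `h` on the unit disk: there is an analytic `ω : 𝔻 → 𝔻`
with `ω 0 = 0` such that `g = h ∘ ω` on `𝔻`. -/
def Subordinate (g h : ℂ → ℂ) : Prop :=
  ∃ ω : ℂ → ℂ, DifferentiableOn ℂ ω (ball 0 1) ∧ ω 0 = 0 ∧
    (∀ z ∈ ball (0 : ℂ) 1, ω z ∈ ball (0 : ℂ) 1) ∧
    ∀ z ∈ ball (0 : ℂ) 1, g z = h (ω z)

lemma mobius_ineq (c w : ℂ) (hc : ‖c‖ < 1) (hw : ‖w‖ < 1) :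
    ‖w - c‖ < ‖1 - (starRingEnd ℂ) c * w‖ := by
  have key : Complex.normSq (1 - (starRingEnd ℂ) c * w) - Complex.normSq (w - c)
      = (1 - Complex.normSq c) * (1 - Complex.normSq w) := by
    have hre : (w * (starRingEnd ℂ) c).re = (1 * (starRingEnd ℂ) ((starRingEnd ℂ) c * w)).re := by
      simp [Complex.mul_re, Complex.conj_re, Complex.conj_im]; ring
    rw [Complex.normSq_sub, Complex.normSq_sub, hre]
    simp [Complex.normSq_mul, Complex.normSq_conj]
    ring
  have hc2 : Complex.normSq c < 1 := by rw [← Complex.sq_norm]; nlinarith [norm_nonneg c]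
  have hw2 : Complex.normSq w < 1 := by rw [← Complex.sq_norm]; nlinarith [norm_nonneg w]
  have hpos : 0 < (1 - Complex.normSq c) * (1 - Complex.normSq w) := by
    apply mul_pos <;> linarith
  have e1 := Complex.sq_norm (1 - (starRingEnd ℂ) c * w)
  have e2 := Complex.sq_norm (w - c)
  nlinarith [norm_nonneg (w - c), norm_nonneg (1 - (starRingEnd ℂ) c * w)]

lemma schwarz_coeffs (ω : ℂ → ℂ) (hω : DifferentiableOn ℂ ω (ball 0 1)) (h0 : ω 0 = 0)
    (hmap : MapsTo ω (ball 0 1) (ball 0 1)) :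
    ‖deriv ω 0‖ ≤ 1 ∧
      ‖deriv (dslope ω 0) 0‖ ≤ 1 - ‖deriv ω 0‖ ^ 2 := by
  set ψ := dslope ω 0 with hψ
  have hball : ball (0 : ℂ) 1 ∈ nhds (0 : ℂ) := isOpen_ball.mem_nhds (mem_ball_self one_pos)
  have hψd : DifferentiableOn ℂ ψ (ball 0 1) := (differentiableOn_dslope hball).mpr hω
  have hmap' : MapsTo ω (ball 0 1) (ball (ω 0) 1) := by rwa [h0]
  have hψle : ∀ z ∈ ball (0 : ℂ) 1, ‖ψ z‖ ≤ 1 := by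
    intro z hz
    simpa using Complex.norm_dslope_le_div_of_mapsTo_ball hω (hmap'.mono_right ball_subset_closedBall) hz
  have hψ0 : ψ 0 = deriv ω 0 := dslope_same ω 0
  set c := deriv ω 0 with hc
  have habs1 : ‖c‖ ≤ 1 := by
    have := hψle 0 (mem_ball_self one_pos)
    rwa [hψ0] at this
  refine ⟨habs1, ?_⟩
  by_cases hcase : ∃ z₀ ∈ ball (0 : ℂ) 1, ‖ψ z₀‖ = 1
  · obtain ⟨z₀, hz₀, hmax⟩ := hcase
    have hmaxon : IsMaxOn (norm ∘ ψ) (ball (0 : ℂ) 1) z₀ := by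
      intro z hz; simp only [Function.comp_apply, hmax]; exact hψle z hz
    have hconst : EqOn ψ (Function.const ℂ (ψ z₀)) (ball (0 : ℂ) 1) :=
      Complex.eqOn_of_isPreconnected_of_isMaxOn_norm (convex_ball 0 1).isPreconnected
        isOpen_ball hψd hz₀ hmaxon
    have hev : ψ =ᶠ[nhds 0] (Function.const ℂ (ψ z₀)) :=
      Filter.eventuallyEq_of_mem hball hconst
    have hd0 : deriv ψ 0 = 0 := by
      rw [hev.deriv_eq]; exact deriv_const 0 _
    have hcabs : ‖c‖ = 1 := by
      have h2 : ψ 0 = ψ z₀ := hconst (mem_ball_self one_pos)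
      rw [← hψ0, h2]
      simpa using hmax
    rw [hd0, hcabs]; simp
  · push_neg at hcase
    have hψlt : ∀ z ∈ ball (0 : ℂ) 1, ‖ψ z‖ < 1 := fun z hz =>
      lt_of_le_of_ne (hψle z hz) (hcase z hz)
    have hclt : ‖c‖ < 1 := by
      have := hψlt 0 (mem_ball_self one_pos); rwa [hψ0] at this
    set k := (starRingEnd ℂ) c with hk
    have hkc : k * c = (Complex.normSq c : ℂ) := by
      rw [hk, mul_comm]; exact Complex.mul_conj c
    have hdenz : ∀ w : ℂ, ‖w‖ < 1 → (1 : ℂ) - k * w ≠ 0 := by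
      intro w hw h
      have h1 : ‖k * w‖ < 1 := by
        rw [norm_mul, hk, Complex.norm_conj]
        calc ‖c‖ * ‖w‖ ≤ 1 * ‖w‖ :=
              mul_le_mul_of_nonneg_right hclt.le (norm_nonneg w)
          _ = ‖w‖ := one_mul _
          _ < 1 := hw
      have h2 : k * w = 1 := by linear_combination -h
      rw [h2] at h1; simp at h1
    have hden : (1 : ℂ) - k * c ≠ 0 := hdenz c hclt
    set χ : ℂ → ℂ := fun w => (w - c) / (1 - k * w) with hχ
    set B : ℂ → ℂ := fun z => χ (ψ z) with hB
    have hBd : DifferentiableOn ℂ B (ball 0 1) := by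
      intro z hz
      have h1 : DifferentiableWithinAt ℂ ψ (ball 0 1) z := hψd z hz
      have hw : ‖ψ z‖ < 1 := by simpa using hψlt z hz
      exact (h1.sub (differentiableWithinAt_const c)).div
        ((differentiableWithinAt_const 1).sub ((differentiableWithinAt_const k).mul h1))
        (hdenz _ hw)
    have hB0 : B 0 = 0 := by
      rw [hB]; simp only [hψ0, ← hc]; rw [hχ]; simp
    have hBmap : MapsTo B (ball 0 1) (ball (B 0) 1) := by
      rw [hB0]
      intro z hz
      rw [mem_ball_zero_iff]
      have hw : ‖ψ z‖ < 1 := by simpa using hψlt z hz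
      have hm := mobius_ineq c (ψ z) hclt hw
      have hdpos : 0 < ‖1 - k * ψ z‖ :=
        norm_pos_iff.mpr (hdenz _ hw)
      simp only [hB, hχ]
      rw [norm_div, div_lt_one hdpos]
      exact hm
    have hschwarz : ‖deriv B 0‖ ≤ 1 / 1 :=
      Complex.norm_deriv_le_div_of_mapsTo_ball hBd (hBmap.mono_right ball_subset_closedBall) one_pos
    -- compute deriv B 0
    have hψat : HasDerivAt ψ (deriv ψ 0) 0 :=
      (hψd.differentiableAt hball).hasDerivAt
    set d : ℂ := (1 - k * c)⁻¹ with hd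
    have hχat : HasDerivAt χ d c := by
      have hnum : HasDerivAt (fun w : ℂ => w - c) 1 c := (hasDerivAt_id c).sub_const c
      have hden' : HasDerivAt (fun w : ℂ => 1 - k * w) (-(k * 1)) c :=
        ((hasDerivAt_id c).const_mul k).const_sub 1
      have := hnum.div hden' hden
      rw [show ((fun w : ℂ => w - c) / fun w => 1 - k * w) = χ from rfl] at this
      have hdv : d = (1 * (1 - k * c) - (c - c) * -(k * 1)) / (1 - k * c) ^ 2 := by
        rw [hd, sub_self, zero_mul, sub_zero, one_mul, pow_two, div_mul_eq_div_div, div_self hden,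
          one_div]
      rw [hdv]; exact this
    have hBat : HasDerivAt B (d * deriv ψ 0) 0 := by
      have : HasDerivAt χ d (ψ 0) := by rwa [hψ0]
      exact HasDerivAt.comp 0 this hψat
    have hderivB : deriv B 0 = d * deriv ψ 0 := hBat.deriv
    rw [hderivB] at hschwarz
    have hdne : d ≠ 0 := inv_ne_zero hden
    have habs : ‖deriv ψ 0‖ ≤ ‖1 - k * c‖ := by
      rw [norm_mul, hd, norm_inv] at hschwarz
      have hpos : 0 < ‖1 - k * c‖ := norm_pos_iff.mpr hden
      rw [inv_mul_le_iff₀ hpos] at hschwarz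
      · linarith [hschwarz]
    have hns : Complex.normSq c ≤ 1 := by
      rw [← Complex.sq_norm]; nlinarith [norm_nonneg c]
    have : ‖1 - k * c‖ = 1 - ‖c‖ ^ 2 := by
      rw [hkc, ← Complex.ofReal_one, ← Complex.ofReal_sub, Complex.norm_real, Real.norm_eq_abs,
        _root_.abs_of_nonneg (by linarith), ← Complex.sq_norm]
    rw [this] at habs
    exact habs

lemma deriv2_eq_two_dslope (ω : ℂ → ℂ) (hω : DifferentiableOn ℂ ω (ball 0 1)) (h0 : ω 0 = 0) :
    deriv (deriv ω) 0 = 2 * deriv (dslope ω 0) 0 := by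
  set ψ := dslope ω 0 with hψ
  have hball : ball (0 : ℂ) 1 ∈ nhds (0 : ℂ) := isOpen_ball.mem_nhds (mem_ball_self one_pos)
  have hψd : DifferentiableOn ℂ ψ (ball 0 1) := (differentiableOn_dslope hball).mpr hω
  have hA : AnalyticOnNhd ℂ ψ (ball 0 1) := hψd.analyticOnNhd isOpen_ball
  have hA' : AnalyticOnNhd ℂ (deriv ψ) (ball 0 1) := hA.deriv
  have hωeq : ∀ z : ℂ, ω z = z * ψ z := by
    intro z
    have := sub_smul_dslope ω 0 z
    rw [h0, sub_zero, sub_zero, smul_eq_mul] at this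
    exact this.symm
  have hder : ∀ z ∈ ball (0 : ℂ) 1, deriv ω z = ψ z + z * deriv ψ z := by
    intro z hz
    have hψz : HasDerivAt ψ (deriv ψ z) z := ((hA z hz).differentiableAt).hasDerivAt
    have h1 : HasDerivAt (fun w : ℂ => w * ψ w) (1 * ψ z + z * deriv ψ z) z :=
      (hasDerivAt_id z).mul hψz
    have h2 : HasDerivAt ω (1 * ψ z + z * deriv ψ z) z := by
      have : ω = fun w : ℂ => w * ψ w := funext hωeq
      rw [this]; exact h1
    rw [h2.deriv]; ring
  have hev : deriv ω =ᶠ[nhds 0] (fun z => ψ z + z * deriv ψ z) :=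
    Filter.eventuallyEq_of_mem hball hder
  rw [hev.deriv_eq]
  have hψ0 : HasDerivAt ψ (deriv ψ 0) 0 := ((hA 0 (mem_ball_self one_pos)).differentiableAt).hasDerivAt
  have hψ'0 : HasDerivAt (deriv ψ) (deriv (deriv ψ) 0) 0 :=
    ((hA' 0 (mem_ball_self one_pos)).differentiableAt).hasDerivAt
  have h3 : HasDerivAt (fun z : ℂ => ψ z + z * deriv ψ z)
      (deriv ψ 0 + (1 * deriv ψ 0 + 0 * deriv (deriv ψ) 0)) 0 :=
    hψ0.add ((hasDerivAt_id 0).mul hψ'0)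
  rw [h3.deriv]; ring

lemma subord_coeffs (u φ : ℂ → ℂ) (B₁ B₂ : ℝ)
    (hu : DifferentiableOn ℂ u (ball 0 1)) (hu1 : deriv u 0 = 1)
    (hφ : DifferentiableOn ℂ φ (ball 0 1))
    (hφ1 : deriv φ 0 = (B₁ : ℂ)) (hφ2 : deriv (deriv φ) 0 = 2 * (B₂ : ℂ))
    (hsub : Subordinate (fun z => 1 + z * deriv (deriv u) z / deriv u z) φ) :
    ∃ c γ : ℂ, ‖c‖ ≤ 1 ∧ ‖γ‖ ≤ 2 * (1 - ‖c‖ ^ 2) ∧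
      deriv (deriv u) 0 = (B₁ : ℂ) * c ∧
      2 * (deriv (deriv (deriv u)) 0 - (deriv (deriv u) 0) ^ 2)
        = 2 * (B₂ : ℂ) * c ^ 2 + (B₁ : ℂ) * γ := by
  have hball : ball (0 : ℂ) 1 ∈ nhds (0 : ℂ) := isOpen_ball.mem_nhds (mem_ball_self one_pos)
  have h0mem : (0 : ℂ) ∈ ball (0 : ℂ) 1 := mem_ball_self one_pos
  obtain ⟨ω, hωd, hω0, hωmap, heq⟩ := hsub
  have hmapsTo : MapsTo ω (ball 0 1) (ball 0 1) := fun z hz => hωmap z hz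
  -- analyticity
  have hAu : AnalyticOnNhd ℂ u (ball 0 1) := hu.analyticOnNhd isOpen_ball
  have hAu1 : AnalyticOnNhd ℂ (deriv u) (ball 0 1) := hAu.deriv
  have hAu2 : AnalyticOnNhd ℂ (deriv (deriv u)) (ball 0 1) := hAu1.deriv
  have hAω : AnalyticOnNhd ℂ ω (ball 0 1) := hωd.analyticOnNhd isOpen_ball
  have hAω1 : AnalyticOnNhd ℂ (deriv ω) (ball 0 1) := hAω.deriv
  have hAφ : AnalyticOnNhd ℂ φ (ball 0 1) := hφ.analyticOnNhd isOpen_ball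
  have hAφ1 : AnalyticOnNhd ℂ (deriv φ) (ball 0 1) := hAφ.deriv
  -- Schwarz data
  set c := deriv ω 0 with hc
  set γ := deriv (deriv ω) 0 with hγ
  obtain ⟨habsc, habsψ⟩ := schwarz_coeffs ω hωd hω0 hmapsTo
  have hγ2 : γ = 2 * deriv (dslope ω 0) 0 := deriv2_eq_two_dslope ω hωd hω0
  have habsγ : ‖γ‖ ≤ 2 * (1 - ‖c‖ ^ 2) := by
    rw [hγ2, norm_mul]
    have : ‖(2 : ℂ)‖ = 2 := by norm_num
    rw [this]
    linarith [habsψ]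
  refine ⟨c, γ, habsc, habsγ, ?_, ?_⟩
  -- notation
  all_goals {
    have hωc : ∀ z ∈ ball (0 : ℂ) 1, HasDerivAt ω (deriv ω z) z :=
      fun z hz => ((hAω z hz).differentiableAt).hasDerivAt
    -- derivative of φ ∘ ω on the ball
    have hφω : ∀ z ∈ ball (0 : ℂ) 1,
        HasDerivAt (fun w => φ (ω w)) (deriv φ (ω z) * deriv ω z) z := by
      intro z hz
      exact HasDerivAt.comp z ((hAφ (ω z) (hωmap z hz)).differentiableAt).hasDerivAt (hωc z hz)
    -- the lhs function g
    set g : ℂ → ℂ := fun z => 1 + z * deriv (deriv u) z / deriv u z with hg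
    have hgev : g =ᶠ[nhds 0] fun z => φ (ω z) := Filter.eventuallyEq_of_mem hball heq
    -- nonvanishing of deriv u near 0
    have hcont : ContinuousAt (deriv u) 0 := ((hAu1 0 h0mem).differentiableAt).continuousAt
    have hne : ∀ᶠ z in nhds (0 : ℂ), deriv u z ≠ 0 := by
      have : {(1 : ℂ)}ᶜ ∈ nhds (0:ℂ) → True := fun _ => trivial
      have h1 : {w : ℂ | w ≠ 0} ∈ nhds (deriv u 0) := by
        rw [hu1]; exact isOpen_ne.mem_nhds one_ne_zero
      exact hcont h1
    obtain ⟨s, hs_sub, hs_open, hs_mem⟩ := _root_.mem_nhds_iff.mp (Filter.inter_mem hne hball)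
    set r : ℂ → ℂ := fun z => deriv (deriv u) z / deriv u z with hr
    have hrA : ∀ z ∈ s, AnalyticAt ℂ r z := by
      intro z hz
      exact ((hAu2 z (hs_sub hz).2).div (hAu1 z (hs_sub hz).2) (hs_sub hz).1)
    have hgeq : ∀ z, g z = 1 + z * r z := by
      intro z; rw [hg, hr]; simp [mul_div_assoc]
    have hgder : ∀ z ∈ s, deriv g z = r z + z * deriv r z := by
      intro z hz
      have hrz : HasDerivAt r (deriv r z) z := ((hrA z hz).differentiableAt).hasDerivAt
      have h1 : HasDerivAt (fun w => 1 + w * r w) (0 + (1 * r z + z * deriv r z)) z :=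
        (hasDerivAt_const z (1:ℂ)).add ((hasDerivAt_id z).mul hrz)
      have h2 : HasDerivAt g (0 + (1 * r z + z * deriv r z)) z := by
        have : g = fun w => 1 + w * r w := funext hgeq
        rw [this]; exact h1
      rw [h2.deriv]; ring
    have hs_nhds : s ∈ nhds (0 : ℂ) := hs_open.mem_nhds hs_mem
    -- first coefficient
    have e1 : deriv g 0 = deriv (deriv u) 0 := by
      rw [hgder 0 hs_mem, hr]
      simp [hu1]
    have e1' : deriv (fun w => φ (ω w)) 0 = (B₁ : ℂ) * c := by
      rw [(hφω 0 h0mem).deriv, hω0, hφ1]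
    have first : deriv (deriv u) 0 = (B₁ : ℂ) * c := by
      rw [← e1, ← e1', hgev.deriv_eq]
    -- second coefficient
    have hgev2 : deriv g =ᶠ[nhds 0] (fun z => r z + z * deriv r z) :=
      Filter.eventuallyEq_of_mem hs_nhds hgder
    have hφωev : deriv (fun w => φ (ω w)) =ᶠ[nhds 0]
        (fun z => deriv φ (ω z) * deriv ω z) :=
      Filter.eventuallyEq_of_mem hball (fun z hz => (hφω z hz).deriv)
    -- deriv r 0
    have hA0 : HasDerivAt (deriv u) (deriv (deriv u) 0) 0 :=
      ((hAu1 0 h0mem).differentiableAt).hasDerivAt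
    have hA1 : HasDerivAt (deriv (deriv u)) (deriv (deriv (deriv u)) 0) 0 :=
      ((hAu2 0 h0mem).differentiableAt).hasDerivAt
    have hr0 : deriv r 0 = deriv (deriv (deriv u)) 0 - (deriv (deriv u) 0) ^ 2 := by
      have := (hA1.div hA0 (by rw [hu1]; exact one_ne_zero)).deriv
      rw [hr, show (fun z => deriv (deriv u) z / deriv u z) = deriv (deriv u) / deriv u from rfl, this, hu1]
      simp
      ring
    -- second derivative of g at 0
    have hrA0 : AnalyticAt ℂ r 0 := hrA 0 hs_mem
    have hrd : HasDerivAt r (deriv r 0) 0 := (hrA0.differentiableAt).hasDerivAt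
    have hrAOn : AnalyticOnNhd ℂ r s := fun z hz => hrA z hz
    have hrd2 : HasDerivAt (deriv r) (deriv (deriv r) 0) 0 :=
      ((hrAOn.deriv 0 hs_mem).differentiableAt).hasDerivAt
    have e2 : deriv (deriv g) 0 = 2 * deriv r 0 := by
      rw [hgev2.deriv_eq]
      have h3 : HasDerivAt (fun z : ℂ => r z + z * deriv r z)
          (deriv r 0 + (1 * deriv r 0 + 0 * deriv (deriv r) 0)) 0 :=
        hrd.add ((hasDerivAt_id 0).mul hrd2)
      rw [h3.deriv]; ring
    -- second derivative of φ ∘ ω at 0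
    have hωd0 : HasDerivAt ω c 0 := hωc 0 h0mem
    have hωd1 : HasDerivAt (deriv ω) γ 0 := ((hAω1 0 h0mem).differentiableAt).hasDerivAt
    have hφd1 : HasDerivAt (deriv φ) (deriv (deriv φ) 0) (ω 0) := by
      rw [hω0]
      exact ((hAφ1 0 h0mem).differentiableAt).hasDerivAt
    have hcomp : HasDerivAt (fun z => deriv φ (ω z)) (deriv (deriv φ) 0 * c) 0 :=
      HasDerivAt.comp 0 hφd1 hωd0
    have e2' : deriv (deriv (fun w => φ (ω w))) 0
        = 2 * (B₂ : ℂ) * c ^ 2 + (B₁ : ℂ) * γ := by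
      rw [hφωev.deriv_eq]
      have h4 : HasDerivAt (fun z => deriv φ (ω z) * deriv ω z)
          (deriv (deriv φ) 0 * c * deriv ω 0 + deriv φ (ω 0) * γ) 0 :=
        hcomp.mul hωd1
      rw [h4.deriv, hω0, hφ1, hφ2, ← hc]
      ring
    have second : 2 * deriv r 0 = 2 * (B₂ : ℂ) * c ^ 2 + (B₁ : ℂ) * γ := by
      rw [← e2, ← e2', (hgev.deriv).deriv_eq]
    rw [hr0] at second
    first
      | exact first
      | exact second
  }

lemma inverse_derivs (f F : ℂ → ℂ)
    (hf : DifferentiableOn ℂ f (ball 0 1)) (hf0 : f 0 = 0) (hf1 : deriv f 0 = 1)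
    (hF : DifferentiableOn ℂ F (ball 0 1))
    (hFf : ∀ᶠ z in nhds (0 : ℂ), F (f z) = z) :
    deriv F 0 = 1 ∧ deriv (deriv F) 0 = - deriv (deriv f) 0 ∧
      deriv (deriv (deriv F)) 0
        = 3 * (deriv (deriv f) 0) ^ 2 - deriv (deriv (deriv f)) 0 := by
  have hball : ball (0 : ℂ) 1 ∈ nhds (0 : ℂ) := isOpen_ball.mem_nhds (mem_ball_self one_pos)
  have h0mem : (0 : ℂ) ∈ ball (0 : ℂ) 1 := mem_ball_self one_pos
  have hAf : AnalyticOnNhd ℂ f (ball 0 1) := hf.analyticOnNhd isOpen_ball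
  have hAf1 : AnalyticOnNhd ℂ (deriv f) (ball 0 1) := hAf.deriv
  have hAf2 : AnalyticOnNhd ℂ (deriv (deriv f)) (ball 0 1) := hAf1.deriv
  have hAF : AnalyticOnNhd ℂ F (ball 0 1) := hF.analyticOnNhd isOpen_ball
  have hAF1 : AnalyticOnNhd ℂ (deriv F) (ball 0 1) := hAF.deriv
  have hAF2 : AnalyticOnNhd ℂ (deriv (deriv F)) (ball 0 1) := hAF1.deriv
  have hfc : ContinuousAt f 0 := ((hAf 0 h0mem).differentiableAt).continuousAt
  have hfball : ∀ᶠ z in nhds (0 : ℂ), f z ∈ ball (0 : ℂ) 1 := by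
    have : ball (0 : ℂ) 1 ∈ nhds (f 0) := by rw [hf0]; exact hball
    exact hfc this
  have hzball : ∀ᶠ z in nhds (0 : ℂ), z ∈ ball (0 : ℂ) 1 := hball
  have hgood : ∀ᶠ z in nhds (0 : ℂ), z ∈ ball (0 : ℂ) 1 ∧ f z ∈ ball (0 : ℂ) 1 :=
    hzball.and hfball
  -- basic HasDerivAt facts on the good set
  set E1 : ℂ → ℂ := fun z => deriv F (f z) * deriv f z with hE1def
  set E2 : ℂ → ℂ := fun z =>
    deriv (deriv F) (f z) * deriv f z * deriv f z + deriv F (f z) * deriv (deriv f) z with hE2def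
  have hder1 : ∀ᶠ z in nhds (0 : ℂ), deriv (fun w => F (f w)) z = E1 z := by
    filter_upwards [hgood] with z hz
    have hfz : HasDerivAt f (deriv f z) z := ((hAf z hz.1).differentiableAt).hasDerivAt
    have hFz : HasDerivAt F (deriv F (f z)) (f z) :=
      ((hAF (f z) hz.2).differentiableAt).hasDerivAt
    exact (HasDerivAt.comp z hFz hfz).deriv
  have hFfev : (fun z => F (f z)) =ᶠ[nhds (0 : ℂ)] id := hFf
  have hE1one : E1 =ᶠ[nhds (0 : ℂ)] fun _ => (1 : ℂ) := by
    have h1 := hFfev.deriv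
    have h2 : deriv (id : ℂ → ℂ) = fun _ => (1 : ℂ) := by
      funext z; exact deriv_id z
    rw [h2] at h1
    have hder1' : deriv (fun w => F (f w)) =ᶠ[nhds (0:ℂ)] E1 := hder1
    exact hder1'.symm.trans h1
  have hF1 : deriv F 0 = 1 := by
    have := hE1one.self_of_nhds
    rw [hE1def] at this
    simp only [hf0, hf1, mul_one] at this
    exact this
  -- second level
  have hder2 : ∀ᶠ z in nhds (0 : ℂ), deriv E1 z = E2 z := by
    filter_upwards [hgood] with z hz
    have hfz : HasDerivAt f (deriv f z) z := ((hAf z hz.1).differentiableAt).hasDerivAt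
    have hf1z : HasDerivAt (deriv f) (deriv (deriv f) z) z :=
      ((hAf1 z hz.1).differentiableAt).hasDerivAt
    have hF1z : HasDerivAt (deriv F) (deriv (deriv F) (f z)) (f z) :=
      ((hAF1 (f z) hz.2).differentiableAt).hasDerivAt
    have hcomp : HasDerivAt (fun w => deriv F (f w)) (deriv (deriv F) (f z) * deriv f z) z :=
      HasDerivAt.comp z hF1z hfz
    have := (hcomp.mul hf1z).deriv
    rw [hE1def, hE2def]
    exact this
  have hE2zero : E2 =ᶠ[nhds (0 : ℂ)] fun _ => (0 : ℂ) := by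
    have h1 := hE1one.deriv
    have h2 : deriv (fun _ : ℂ => (1 : ℂ)) = fun _ => (0 : ℂ) := by
      funext z; exact deriv_const z 1
    rw [h2] at h1
    have hder2' : deriv E1 =ᶠ[nhds (0:ℂ)] E2 := hder2
    exact hder2'.symm.trans h1
  have hF2 : deriv (deriv F) 0 = - deriv (deriv f) 0 := by
    have := hE2zero.self_of_nhds
    rw [hE2def] at this
    simp only [hf0, hf1, hF1, mul_one, one_mul] at this
    linear_combination this
  -- third level
  have hder3 : deriv E2 0 = 0 := by
    have h1 := hE2zero.deriv
    have h2 : deriv (fun _ : ℂ => (0 : ℂ)) = fun _ => (0 : ℂ) := by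
      funext z; exact deriv_const z 0
    rw [h2] at h1
    exact h1.self_of_nhds
  -- compute deriv E2 0 explicitly
  have hfz : HasDerivAt f (deriv f 0) 0 := ((hAf 0 h0mem).differentiableAt).hasDerivAt
  have hf1z : HasDerivAt (deriv f) (deriv (deriv f) 0) 0 :=
    ((hAf1 0 h0mem).differentiableAt).hasDerivAt
  have hf2z : HasDerivAt (deriv (deriv f)) (deriv (deriv (deriv f)) 0) 0 :=
    ((hAf2 0 h0mem).differentiableAt).hasDerivAt
  have hF1z : HasDerivAt (deriv F) (deriv (deriv F) (f 0)) (f 0) := by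
    rw [hf0]; exact ((hAF1 0 h0mem).differentiableAt).hasDerivAt
  have hF2z : HasDerivAt (deriv (deriv F)) (deriv (deriv (deriv F)) (f 0)) (f 0) := by
    rw [hf0]; exact ((hAF2 0 h0mem).differentiableAt).hasDerivAt
  have hcomp1 : HasDerivAt (fun w => deriv (deriv F) (f w))
      (deriv (deriv (deriv F)) (f 0) * deriv f 0) 0 := HasDerivAt.comp 0 hF2z hfz
  have hcomp0 : HasDerivAt (fun w => deriv F (f w))
      (deriv (deriv F) (f 0) * deriv f 0) 0 := HasDerivAt.comp 0 hF1z hfz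
  have hE2at : HasDerivAt E2
      ((deriv (deriv (deriv F)) (f 0) * deriv f 0 * deriv f 0
          + deriv (deriv F) (f 0) * deriv (deriv f) 0) * deriv f 0
        + deriv (deriv F) (f 0) * deriv f 0 * deriv (deriv f) 0
        + (deriv (deriv F) (f 0) * deriv f 0 * deriv (deriv f) 0
          + deriv F (f 0) * deriv (deriv (deriv f)) 0)) 0 := by
    rw [hE2def]
    exact ((hcomp1.mul hf1z).mul hf1z).add (hcomp0.mul hf2z)
  have hval := hE2at.deriv
  rw [hder3] at hval
  refine ⟨hF1, hF2, ?_⟩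
  rw [hf0, hf1, hF1, hF2] at hval
  linear_combination -hval

set_option maxHeartbeats 1000000 in
theorem stmt9
    (f F : ℂ → ℂ)
    (hf : DifferentiableOn ℂ f (ball 0 1)) (hf0 : f 0 = 0) (hf1 : deriv f 0 = 1)
    (hfi : InjOn f (ball 0 1))
    (hF : DifferentiableOn ℂ F (ball 0 1)) (hF0 : F 0 = 0) (hFi : InjOn F (ball 0 1))
    (hFf : ∀ᶠ z in nhds (0 : ℂ), F (f z) = z)
    (φ : ℂ → ℂ) (B₁ B₂ : ℝ)
    (hφ : DifferentiableOn ℂ φ (ball 0 1)) (hφ0 : φ 0 = 1)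
    (hB₁ : 0 < B₁) (hφ1 : deriv φ 0 = (B₁ : ℂ)) (hφ2 : iteratedDeriv 2 φ 0 = 2 * (B₂ : ℂ))
    (hfsub : Subordinate (fun z => 1 + z * deriv (deriv f) z / deriv f z) φ)
    (hFsub : Subordinate (fun w => 1 + w * deriv (deriv F) w / deriv F w) φ) :
    ‖iteratedDeriv 3 f 0 / 6‖ ≤ min ((B₁ ^ 2 + B₁ + |B₂ - B₁|) / 6) (B₁ * (3 * B₁ + 2) / 12) := by
  have hφ2' : deriv (deriv φ) 0 = 2 * (B₂ : ℂ) := by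
    rw [← hφ2, show (2 : ℕ) = 1 + 1 from rfl, iteratedDeriv_succ, iteratedDeriv_one]
  obtain ⟨c, γ, hc1, hγ1, hceq, hγeq⟩ := subord_coeffs f φ B₁ B₂ hf hf1 hφ hφ1 hφ2' hfsub
  obtain ⟨hF1, hF2, hF3⟩ := inverse_derivs f F hf hf0 hf1 hF hFf
  obtain ⟨d, δ, hd1, hδ1, hdeq, hδeq⟩ := subord_coeffs F φ B₁ B₂ hF hF1 hφ hφ1 hφ2' hFsub
  set p2 := deriv (deriv f) 0 with hp2
  set p3 := deriv (deriv (deriv f)) 0 with hp3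
  have hB1ne : (B₁ : ℂ) ≠ 0 := by exact_mod_cast hB₁.ne'
  have hdc : d = -c := by
    have h1 : (B₁ : ℂ) * d = (B₁ : ℂ) * (-c) := by
      rw [← hdeq, hF2, hceq]; ring
    exact mul_left_cancel₀ hB1ne h1
  have key1 : p3 = ((B₁ : ℂ) * c) ^ 2 + (B₂ : ℂ) * c ^ 2 + (B₁ : ℂ) * γ / 2 := by
    linear_combination (1 / 2 : ℂ) * hγeq + (p2 + (B₁ : ℂ) * c) * hceq
  have hδeq' : 2 * ((3 * p2 ^ 2 - p3) - (-p2) ^ 2)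
      = 2 * (B₂ : ℂ) * (-c) ^ 2 + (B₁ : ℂ) * δ := by
    rw [← hF3, ← hF2, ← hdc]; exact hδeq
  have key2 : p3 = (3 / 2 : ℂ) * ((B₁ : ℂ) * c) ^ 2 + (B₁ : ℂ) * γ / 4 - (B₁ : ℂ) * δ / 4 := by
    linear_combination (1 / 4 : ℂ) * hγeq - (1 / 4 : ℂ) * hδeq'
      + (3 / 2 : ℂ) * (p2 + (B₁ : ℂ) * c) * hceq
  -- real estimates
  set a := ‖c‖ with ha
  have ha0 : 0 ≤ a := norm_nonneg c
  have hδa : ‖δ‖ ≤ 2 * (1 - a ^ 2) := by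
    have : ‖d‖ = a := by rw [hdc]; exact norm_neg c
    rwa [this] at hδ1
  have habsB1 : ‖((B₁ : ℝ) : ℂ)‖ = B₁ := by
    rw [Complex.norm_real, Real.norm_eq_abs, _root_.abs_of_pos hB₁]
  have habsB2 : ‖((B₂ : ℝ) : ℂ)‖ = |B₂| := by rw [Complex.norm_real, Real.norm_eq_abs]
  have hterm1 : ‖((B₁ : ℂ) * c) ^ 2‖ = B₁ ^ 2 * a ^ 2 := by
    rw [norm_pow, norm_mul, habsB1]; ring
  have hterm2 : ‖(B₂ : ℂ) * c ^ 2‖ = |B₂| * a ^ 2 := by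
    rw [norm_mul, norm_pow, habsB2]
  have htermγ : ‖(B₁ : ℂ) * γ‖ = B₁ * ‖γ‖ := by
    rw [norm_mul, habsB1]
  have htermδ : ‖(B₁ : ℂ) * δ‖ = B₁ * ‖δ‖ := by
    rw [norm_mul, habsB1]
  have bound1 : ‖p3‖ ≤ B₁ ^ 2 * a ^ 2 + |B₂| * a ^ 2 + B₁ * (1 - a ^ 2) := by
    rw [key1]
    calc ‖((B₁ : ℂ) * c) ^ 2 + (B₂ : ℂ) * c ^ 2 + (B₁ : ℂ) * γ / 2‖
        ≤ ‖((B₁ : ℂ) * c) ^ 2 + (B₂ : ℂ) * c ^ 2‖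
            + ‖(B₁ : ℂ) * γ / 2‖ := norm_add_le _ _
      _ ≤ ‖((B₁ : ℂ) * c) ^ 2‖ + ‖(B₂ : ℂ) * c ^ 2‖
            + ‖(B₁ : ℂ) * γ / 2‖ := by
          linarith [norm_add_le (((B₁ : ℂ) * c) ^ 2) ((B₂ : ℂ) * c ^ 2)]
      _ ≤ B₁ ^ 2 * a ^ 2 + |B₂| * a ^ 2 + B₁ * (1 - a ^ 2) := by
          rw [hterm1, hterm2, norm_div, htermγ]
          have h6 : ‖(2 : ℂ)‖ = 2 := by norm_num
          rw [h6]
          have := hγ1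
          nlinarith [hB₁.le]
  have bound2 : ‖p3‖ ≤ 3 / 2 * B₁ ^ 2 + B₁ := by
    rw [key2]
    have h1 : ‖(3 / 2 : ℂ) * ((B₁ : ℂ) * c) ^ 2‖ = 3 / 2 * (B₁ ^ 2 * a ^ 2) := by
      rw [norm_mul, hterm1]
      norm_num
    calc ‖(3 / 2 : ℂ) * ((B₁ : ℂ) * c) ^ 2 + (B₁ : ℂ) * γ / 4 - (B₁ : ℂ) * δ / 4‖
        ≤ ‖(3 / 2 : ℂ) * ((B₁ : ℂ) * c) ^ 2 + (B₁ : ℂ) * γ / 4‖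
            + ‖(B₁ : ℂ) * δ / 4‖ := by
          rw [sub_eq_add_neg]
          refine (norm_add_le _ _).trans ?_
          rw [norm_neg]
      _ ≤ ‖(3 / 2 : ℂ) * ((B₁ : ℂ) * c) ^ 2‖ + ‖(B₁ : ℂ) * γ / 4‖
            + ‖(B₁ : ℂ) * δ / 4‖ := by
          linarith [norm_add_le ((3 / 2 : ℂ) * ((B₁ : ℂ) * c) ^ 2) ((B₁ : ℂ) * γ / 4)]
      _ ≤ 3 / 2 * B₁ ^ 2 + B₁ := by
          rw [h1, norm_div, norm_div, htermγ, htermδ]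
          have h4 : ‖(4 : ℂ)‖ = 4 := by norm_num
          rw [h4]
          nlinarith [hγ1, hδa, hB₁.le, sq_nonneg a,
            mul_nonneg (sq_nonneg B₁) (sub_nonneg.mpr (by nlinarith : a ^ 2 ≤ 1))]
  have hiter : iteratedDeriv 3 f 0 = p3 := by
    rw [show (3 : ℕ) = 2 + 1 from rfl, iteratedDeriv_succ,
      show (2 : ℕ) = 1 + 1 from rfl, iteratedDeriv_succ, iteratedDeriv_one]
  rw [hiter, norm_div, show ‖(6 : ℂ)‖ = 6 by norm_num]
  have hB2tri : |B₂| ≤ B₁ + |B₂ - B₁| := by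
    calc |B₂| = |B₁ + (B₂ - B₁)| := by ring_nf
      _ ≤ |B₁| + |B₂ - B₁| := abs_add_le _ _
      _ = B₁ + |B₂ - B₁| := by rw [_root_.abs_of_pos hB₁]
  rw [le_min_iff]
  constructor
  · have ha2 : a ^ 2 ≤ 1 := by nlinarith
    have habs2 : 0 ≤ |B₂ - B₁| := abs_nonneg _
    nlinarith [mul_nonneg (sub_nonneg.mpr ha2) (sq_nonneg B₁),
      mul_nonneg (sub_nonneg.mpr ha2) habs2,
      mul_nonneg (sq_nonneg a) (sub_nonneg.mpr (by linarith : |B₂| ≤ B₁ + |B₂ - B₁|))]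
  · nlinarith
end
end

section
/- Let f be bi-univalent with inverse extension F. If 1 + zf''(z)/f'(z) ≺ φ(z) and F'(w) ≺ φ(w), then the second Taylor coefficient of f satisfies |a₂| ≤ √(3(B₁ + |B₂ − B₁|)/8). -/
open Metric Set Complex

noncomputable section

private lemma AnalyticAt.deriv' {f : ℂ → ℂ} {x : ℂ} (h : AnalyticAt ℂ f x) :
    AnalyticAt ℂ (deriv f) x :=
  ((ContinuousLinearMap.apply ℂ ℂ (1:ℂ)).analyticAt _).comp h.fderiv

/-- eventual chain rule -/
private lemma ev_deriv_comp {u v : ℂ → ℂ} {a : ℂ} (hu : AnalyticAt ℂ u a)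
    (hv : AnalyticAt ℂ v (u a)) :
    deriv (fun z => v (u z)) =ᶠ[nhds a] fun z => deriv v (u z) * deriv u z := by
  have h1 : ∀ᶠ z in nhds a, AnalyticAt ℂ v (u z) :=
    hu.continuousAt.eventually hv.eventually_analyticAt
  filter_upwards [h1, hu.eventually_analyticAt] with z hz1 hz2
  exact deriv_comp z hz1.differentiableAt hz2.differentiableAt

private lemma deriv2_comp {u v : ℂ → ℂ} {a : ℂ} (hu : AnalyticAt ℂ u a)
    (hv : AnalyticAt ℂ v (u a)) :
    deriv (deriv (fun z => v (u z))) a =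
      deriv (deriv v) (u a) * (deriv u a * deriv u a) + deriv v (u a) * deriv (deriv u) a := by
  rw [(ev_deriv_comp hu hv).deriv_eq]
  have hd1 : DifferentiableAt ℂ (fun z => deriv v (u z)) a :=
    (hv.deriv'.comp hu).differentiableAt
  rw [deriv_fun_mul hd1 hu.deriv'.differentiableAt,
    show deriv (fun z => deriv v (u z)) a = deriv (deriv v) (u a) * deriv u a from
      deriv_comp a hv.deriv'.differentiableAt hu.differentiableAt]
  ring

/-- Möbius maps-to fact. -/
private lemma mobius_mem_ball {a w : ℂ} (ha : ‖a‖ < 1) (hw : ‖w‖ < 1) :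
    (w - a) / (1 - (starRingEnd ℂ) a * w) ∈ ball (0:ℂ) 1 := by
  have hden : (1 : ℂ) - (starRingEnd ℂ) a * w ≠ 0 := by
    intro h
    have h1 : (1:ℂ) = (starRingEnd ℂ) a * w := by linear_combination h
    have : ‖(1:ℂ)‖ < 1 := by
      rw [h1, norm_mul, RCLike.norm_conj]
      nlinarith [norm_nonneg a, norm_nonneg w]
    simp at this
  rw [mem_ball_zero_iff, norm_div, div_lt_one (norm_pos_iff.mpr hden)]
  have ha2 : Complex.normSq a < 1 := by
    have := Complex.sq_norm a; have : Complex.normSq a = ‖a‖^2 := by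
      rw [Complex.normSq_eq_norm_sq]
    nlinarith [norm_nonneg a]
  have hw2 : Complex.normSq w < 1 := by
    have : Complex.normSq w = ‖w‖^2 := by
      rw [Complex.normSq_eq_norm_sq]
    nlinarith [norm_nonneg w]
  have key : Complex.normSq (w - a) < Complex.normSq (1 - (starRingEnd ℂ) a * w) := by
    simp only [Complex.normSq_apply, Complex.sub_re, Complex.sub_im, Complex.mul_re,
      Complex.mul_im, Complex.conj_re, Complex.conj_im, Complex.one_re, Complex.one_im] at *
    nlinarith [ha2, hw2]
  calc ‖w - a‖ = Real.sqrt (Complex.normSq (w - a)) := by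
        rw [Complex.norm_def]
    _ < Real.sqrt (Complex.normSq (1 - (starRingEnd ℂ) a * w)) := by
        exact Real.sqrt_lt_sqrt (Complex.normSq_nonneg _) key
    _ = ‖1 - (starRingEnd ℂ) a * w‖ := by rw [Complex.norm_def]

private lemma sp_deriv_bound {g : ℂ → ℂ} (hg : DifferentiableOn ℂ g (ball 0 1))
    (hle : ∀ z ∈ ball (0:ℂ) 1, ‖g z‖ ≤ 1) :
    ‖deriv g 0‖ ≤ 1 - ‖g 0‖^2 := by
  have hb : ball (0:ℂ) 1 ∈ nhds (0:ℂ) := isOpen_ball.mem_nhds (mem_ball_self one_pos)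
  have h0 : (0:ℂ) ∈ ball (0:ℂ) 1 := mem_ball_self one_pos
  by_cases hlt : ∀ z ∈ ball (0:ℂ) 1, ‖g z‖ < 1
  · set a := g 0 with ha_def
    have ha : ‖a‖ < 1 := hlt 0 h0
    have hca : ∀ w : ℂ, ‖w‖ < 1 → (1 : ℂ) - (starRingEnd ℂ) a * w ≠ 0 := by
      intro w hw h
      have h1 : (1:ℂ) = (starRingEnd ℂ) a * w := by linear_combination h
      have : ‖(1:ℂ)‖ < 1 := by
        rw [h1, norm_mul, RCLike.norm_conj]
        nlinarith [norm_nonneg a, norm_nonneg w]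
      simp at this
    set h := fun z => (g z - a) / (1 - (starRingEnd ℂ) a * g z) with hh_def
    have hhd : DifferentiableOn ℂ h (ball 0 1) := by
      apply DifferentiableOn.div
      · exact hg.sub (differentiableOn_const a)
      · exact (differentiableOn_const (1:ℂ)).sub ((differentiableOn_const _).mul hg)
      · intro z hz; exact hca (g z) (hlt z hz)
    have hh0 : h 0 = 0 := by simp [hh_def, ha_def]
    have hmaps : MapsTo h (ball (0:ℂ) 1) (ball (h 0) 1) := by
      rw [hh0]
      intro z hz
      exact mobius_mem_ball ha (hlt z hz)
    have hsch : ‖deriv h 0‖ ≤ 1 := by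
      simpa using Complex.norm_deriv_le_div_of_mapsTo_ball hhd (hmaps.mono_right ball_subset_closedBall) one_pos
    -- compute deriv h 0
    have hga : DifferentiableAt ℂ g 0 := (hg.analyticAt hb).differentiableAt
    have hden0 : (1:ℂ) - (starRingEnd ℂ) a * g 0 ≠ 0 := hca a ha
    have hder : deriv h 0 = deriv g 0 / (1 - (starRingEnd ℂ) a * a) := by
      rw [hh_def]
      rw [deriv_fun_div (hga.sub_const a)
        ((differentiableAt_const (1:ℂ)).fun_sub ((differentiableAt_const _).fun_mul hga)) hden0]
      rw [deriv_fun_sub hga (differentiableAt_const a),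
        deriv_fun_sub (differentiableAt_const (1:ℂ)) ((differentiableAt_const _).fun_mul hga),
        deriv_const_mul _ hga]
      simp [← ha_def]
      field_simp
    have hnorm_den : ‖(1:ℂ) - (starRingEnd ℂ) a * a‖ = 1 - ‖a‖^2 := by
      have : (starRingEnd ℂ) a * a = ((Complex.normSq a : ℝ) : ℂ) := by
        rw [mul_comm, Complex.mul_conj]
      have hn : Complex.normSq a = ‖a‖^2 := by
        rw [Complex.normSq_eq_norm_sq]
      rw [this, ← Complex.ofReal_one, ← Complex.ofReal_sub, Complex.norm_real,
        Real.norm_eq_abs, hn]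
      exact abs_of_nonneg (by nlinarith [norm_nonneg a])
    have := hsch
    rw [hder, norm_div, hnorm_den, div_le_one (by nlinarith [norm_nonneg a])] at this
    simpa [← ha_def] using this
  · push_neg at hlt
    obtain ⟨z₀, hz₀, hge⟩ := hlt
    have heq : ‖g z₀‖ = 1 := le_antisymm (hle z₀ hz₀) hge
    have hmax : IsMaxOn (norm ∘ g) (ball (0:ℂ) 1) z₀ := by
      intro z hz
      simp only [Function.comp_apply, heq]
      exact hle z hz
    have hconst := Complex.eqOn_of_isPreconnected_of_isMaxOn_norm
      (convex_ball (0:ℂ) 1).isPreconnected isOpen_ball hg hz₀ hmax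
    have hev : g =ᶠ[nhds (0:ℂ)] fun _ => g z₀ := by
      filter_upwards [hb] with z hz
      exact hconst hz
    have : deriv g 0 = 0 := by
      rw [hev.deriv_eq, deriv_const]
    rw [this, norm_zero]
    nlinarith [hle 0 h0, norm_nonneg (g 0)]

private lemma schwarz_coeff {ω : ℂ → ℂ} (hω : DifferentiableOn ℂ ω (ball 0 1)) (hω0 : ω 0 = 0)
    (hmap : ∀ z ∈ ball (0:ℂ) 1, ω z ∈ ball (0:ℂ) 1) :
    ‖deriv ω 0‖ ≤ 1 ∧ ‖deriv (deriv ω) 0 / 2‖ ≤ 1 - ‖deriv ω 0‖^2 := by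
  have hb : ball (0:ℂ) 1 ∈ nhds (0:ℂ) := isOpen_ball.mem_nhds (mem_ball_self one_pos)
  have hmaps : MapsTo ω (ball (0:ℂ) 1) (ball (ω 0) 1) := by
    rw [hω0]; intro z hz; exact hmap z hz
  set g := dslope ω 0 with hg_def
  have hgd : DifferentiableOn ℂ g (ball 0 1) := (differentiableOn_dslope hb).mpr hω
  have hg_le : ∀ z ∈ ball (0:ℂ) 1, ‖g z‖ ≤ 1 := by
    intro z hz
    simpa using Complex.norm_dslope_le_div_of_mapsTo_ball hω (hmaps.mono_right ball_subset_closedBall) hz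
  have hg0 : g 0 = deriv ω 0 := dslope_same ω 0
  have hgA : AnalyticAt ℂ g 0 := hgd.analyticAt hb
  -- ω z = z * g z
  have hωg : ω = fun z => z * g z := by
    funext z
    rcases eq_or_ne z 0 with rfl | hz
    · simp [hω0]
    · rw [hg_def, dslope_of_ne _ hz, slope_def_field]
      rw [hω0, sub_zero, sub_zero]
      field_simp
  -- deriv ω near 0
  have hev : deriv ω =ᶠ[nhds (0:ℂ)] fun z => g z + z * deriv g z := by
    filter_upwards [hgA.eventually_analyticAt] with z hz
    rw [hωg, deriv_fun_mul differentiableAt_fun_id hz.differentiableAt]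
    simp
  have h2 : deriv (deriv ω) 0 = 2 * deriv g 0 := by
    rw [hev.deriv_eq, deriv_fun_add hgA.differentiableAt
      (differentiableAt_fun_id.fun_mul hgA.deriv'.differentiableAt),
      deriv_fun_mul differentiableAt_fun_id hgA.deriv'.differentiableAt]
    simp
    ring
  constructor
  · rw [← hg0]; exact hg_le 0 (mem_ball_self one_pos)
  · rw [h2, ← hg0]
    have := sp_deriv_bound hgd hg_le
    calc ‖2 * deriv g 0 / 2‖ = ‖deriv g 0‖ := by
          norm_num [mul_div_assoc]
      _ ≤ 1 - ‖g 0‖^2 := this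

theorem stmt11
    (f F : ℂ → ℂ)
    (hf : DifferentiableOn ℂ f (ball 0 1)) (hf0 : f 0 = 0) (hf1 : deriv f 0 = 1)
    (hfi : InjOn f (ball 0 1))
    (hF : DifferentiableOn ℂ F (ball 0 1)) (hF0 : F 0 = 0) (hFi : InjOn F (ball 0 1))
    (hFf : ∀ᶠ z in nhds (0 : ℂ), F (f z) = z)
    (φ : ℂ → ℂ) (B₁ B₂ : ℝ)
    (hφ : DifferentiableOn ℂ φ (ball 0 1)) (hφ0 : φ 0 = 1)
    (hB₁ : 0 < B₁) (hφ1 : deriv φ 0 = (B₁ : ℂ)) (hφ2 : iteratedDeriv 2 φ 0 = 2 * (B₂ : ℂ))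
    (hfsub : Subordinate (fun z => 1 + z * deriv (deriv f) z / deriv f z) φ)
    (hFsub : Subordinate (deriv F) φ) :
    ‖iteratedDeriv 2 f 0 / 2‖ ≤ Real.sqrt (3 * (B₁ + |B₂ - B₁|) / 8) := by
  have hb : ball (0:ℂ) 1 ∈ nhds (0:ℂ) := isOpen_ball.mem_nhds (mem_ball_self one_pos)
  have hfA : AnalyticAt ℂ f 0 := hf.analyticAt hb
  have hFA : AnalyticAt ℂ F 0 := hF.analyticAt hb
  have hφA : AnalyticAt ℂ φ 0 := hφ.analyticAt hb
  have hFA' : AnalyticAt ℂ F (f 0) := by rwa [hf0]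
  have hφ2' : deriv (deriv φ) 0 = 2 * (B₂ : ℂ) := by
    rw [← hφ2, iteratedDeriv_succ, iteratedDeriv_one]
  -- Part A : inverse function relations
  have e2 : (fun z => deriv F (f z) * deriv f z) =ᶠ[nhds (0:ℂ)] (fun _ => (1:ℂ)) := by
    have e0 : (fun z => F (f z)) =ᶠ[nhds (0:ℂ)] (fun z : ℂ => z) := hFf
    have e1 := e0.deriv
    filter_upwards [e1, ev_deriv_comp hfA hFA'] with z h1 h2
    rw [← h2, h1, deriv_id'']
  have hF1 : deriv F 0 = 1 := by
    have h : deriv F (f 0) * deriv f 0 = 1 := e2.self_of_nhds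
    rwa [hf0, hf1, mul_one] at h
  have hEb : ∀ᶠ z in nhds (0:ℂ), AnalyticAt ℂ F (f z) :=
    hfA.continuousAt.eventually hFA'.eventually_analyticAt
  have e4 : deriv (fun z => deriv F (f z) * deriv f z) =ᶠ[nhds (0:ℂ)]
      (fun z => deriv (deriv F) (f z) * deriv f z * deriv f z
        + deriv F (f z) * deriv (deriv f) z) := by
    filter_upwards [hfA.eventually_analyticAt, hEb] with z h1 h2
    have hc : DifferentiableAt ℂ (fun w => deriv F (f w)) z := (h2.deriv'.comp h1).differentiableAt
    rw [deriv_fun_mul hc (h1.deriv'.differentiableAt),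
      show deriv (fun z => deriv F (f z)) z = deriv (deriv F) (f z) * deriv f z from
        deriv_comp z h2.deriv'.differentiableAt h1.differentiableAt]
  have e5 : (fun z => deriv (deriv F) (f z) * deriv f z * deriv f z
      + deriv F (f z) * deriv (deriv f) z) =ᶠ[nhds (0:ℂ)] (fun _ => (0:ℂ)) := by
    have h1 := e2.deriv
    have h2 : deriv (fun _ : ℂ => (1:ℂ)) =ᶠ[nhds (0:ℂ)] (fun _ => (0:ℂ)) :=
      Filter.Eventually.of_forall (fun z => deriv_const z 1)
    exact e4.symm.trans (h1.trans h2)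
  have hA2 : deriv (deriv F) 0 = - deriv (deriv f) 0 := by
    have h : deriv (deriv F) (f 0) * deriv f 0 * deriv f 0 + deriv F (f 0) * deriv (deriv f) 0 = 0 :=
      e5.self_of_nhds
    rw [hf0, hf1, hF1] at h
    linear_combination h
  have e6 : deriv (fun z => deriv (deriv F) (f z) * deriv f z * deriv f z
      + deriv F (f z) * deriv (deriv f) z) 0 = 0 := by
    rw [e5.deriv_eq, deriv_const]
  have hd_q : DifferentiableAt ℂ (fun z => deriv (deriv F) (f z)) 0 :=
    ((hFA'.deriv'.deriv').comp hfA).differentiableAt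
  have hd_f' : DifferentiableAt ℂ (deriv f) 0 := hfA.deriv'.differentiableAt
  have hd_Ff : DifferentiableAt ℂ (fun z => deriv F (f z)) 0 :=
    ((hFA'.deriv').comp hfA).differentiableAt
  have hd_f'' : DifferentiableAt ℂ (deriv (deriv f)) 0 := hfA.deriv'.deriv'.differentiableAt
  have hA3 : deriv (deriv (deriv F)) 0 + 3 * deriv (deriv F) 0 * deriv (deriv f) 0
      + deriv (deriv (deriv f)) 0 = 0 := by
    rw [deriv_fun_add ((hd_q.fun_mul hd_f').fun_mul hd_f') (hd_Ff.fun_mul hd_f''),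
      deriv_fun_mul (hd_q.fun_mul hd_f') hd_f', deriv_fun_mul hd_q hd_f', deriv_fun_mul hd_Ff hd_f'',
      show deriv (fun z => deriv (deriv F) (f z)) 0 = deriv (deriv (deriv F)) (f 0) * deriv f 0
        from deriv_comp 0 (hFA'.deriv'.deriv').differentiableAt hfA.differentiableAt,
      show deriv (fun z => deriv F (f z)) 0 = deriv (deriv F) (f 0) * deriv f 0 from
        deriv_comp 0 (hFA'.deriv').differentiableAt hfA.differentiableAt,
      hf0, hf1, hF1] at e6
    linear_combination e6
  -- Part B : subordination for f
  obtain ⟨ω, hωd, hω0, hωmap, hωeq⟩ := hfsub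
  have hωA : AnalyticAt ℂ ω 0 := hωd.analyticAt hb
  have hφω : AnalyticAt ℂ φ (ω 0) := by rwa [hω0]
  have pe : (fun z => 1 + z * deriv (deriv f) z / deriv f z) =ᶠ[nhds (0:ℂ)]
      (fun z => φ (ω z)) := by
    filter_upwards [hb] with z hz
    exact hωeq z hz
  have hne : ∀ᶠ z in nhds (0:ℂ), deriv f z ≠ 0 :=
    hfA.deriv'.continuousAt.eventually_ne (by rw [hf1]; norm_num)
  have hqA : AnalyticAt ℂ (fun w => deriv (deriv f) w / deriv f w) 0 :=
    hfA.deriv'.deriv'.div hfA.deriv' (by rw [hf1]; norm_num)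
  have pd : deriv (fun z => 1 + z * deriv (deriv f) z / deriv f z) =ᶠ[nhds (0:ℂ)]
      (fun z => deriv (deriv f) z / deriv f z
        + z * deriv (fun w => deriv (deriv f) w / deriv f w) z) := by
    have hpeq : (fun z => 1 + z * deriv (deriv f) z / deriv f z)
        = fun z => 1 + z * (deriv (deriv f) z / deriv f z) := by
      funext z; rw [mul_div_assoc]
    rw [hpeq]
    filter_upwards [hfA.eventually_analyticAt, hne] with z h1 h2
    have hq : DifferentiableAt ℂ (fun w => deriv (deriv f) w / deriv f w) z :=
      (h1.deriv'.deriv'.div h1.deriv' h2).differentiableAt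
    rw [deriv_const_add, deriv_fun_mul differentiableAt_fun_id hq]
    simp
  have hQ0 : deriv (fun w => deriv (deriv f) w / deriv f w) 0
      = deriv (deriv (deriv f)) 0 - deriv (deriv f) 0 * deriv (deriv f) 0 := by
    rw [deriv_fun_div hfA.deriv'.deriv'.differentiableAt hfA.deriv'.differentiableAt
      (by rw [hf1]; norm_num), hf1]
    ring
  have hp1 : deriv (fun z => 1 + z * deriv (deriv f) z / deriv f z) 0 = deriv (deriv f) 0 := by
    have h : deriv (fun z => 1 + z * deriv (deriv f) z / deriv f z) 0
        = deriv (deriv f) 0 / deriv f 0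
          + 0 * deriv (fun w => deriv (deriv f) w / deriv f w) 0 := pd.self_of_nhds
    rw [hf1] at h
    simpa using h
  have hp2 : deriv (deriv (fun z => 1 + z * deriv (deriv f) z / deriv f z)) 0
      = 2 * (deriv (deriv (deriv f)) 0 - deriv (deriv f) 0 * deriv (deriv f) 0) := by
    rw [pd.deriv_eq]
    have hq1 : DifferentiableAt ℂ (fun w => deriv (deriv f) w / deriv f w) 0 :=
      hqA.differentiableAt
    rw [deriv_fun_add hq1 (differentiableAt_fun_id.fun_mul hqA.deriv'.differentiableAt),
      deriv_fun_mul differentiableAt_fun_id hqA.deriv'.differentiableAt]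
    simp [hQ0]
    ring
  have hS1 : deriv (deriv f) 0 = (B₁ : ℂ) * deriv ω 0 := by
    have h := pe.deriv_eq
    rw [hp1, show deriv (fun z => φ (ω z)) 0 = deriv φ (ω 0) * deriv ω 0 from
      deriv_comp 0 hφω.differentiableAt hωA.differentiableAt, hω0, hφ1] at h
    exact h
  have hS2 : 2 * (deriv (deriv (deriv f)) 0 - deriv (deriv f) 0 * deriv (deriv f) 0)
      = 2 * (B₂:ℂ) * (deriv ω 0 * deriv ω 0) + (B₁:ℂ) * deriv (deriv ω) 0 := by
    have h := (pe.deriv).deriv_eq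
    rw [hp2, deriv2_comp hωA hφω, hω0, hφ1, hφ2'] at h
    exact h
  -- Part C : subordination for deriv F
  obtain ⟨τ, hτd, hτ0, hτmap, hτeq⟩ := hFsub
  have hτA : AnalyticAt ℂ τ 0 := hτd.analyticAt hb
  have hφτ : AnalyticAt ℂ φ (τ 0) := by rwa [hτ0]
  have Fe : deriv F =ᶠ[nhds (0:ℂ)] (fun z => φ (τ z)) := by
    filter_upwards [hb] with z hz
    exact hτeq z hz
  have hS3 : deriv (deriv F) 0 = (B₁ : ℂ) * deriv τ 0 := by
    have h := Fe.deriv_eq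
    rw [show deriv (fun z => φ (τ z)) 0 = deriv φ (τ 0) * deriv τ 0 from
      deriv_comp 0 hφτ.differentiableAt hτA.differentiableAt, hτ0, hφ1] at h
    exact h
  have hS4 : deriv (deriv (deriv F)) 0
      = 2 * (B₂:ℂ) * (deriv τ 0 * deriv τ 0) + (B₁:ℂ) * deriv (deriv τ) 0 := by
    have h := (Fe.deriv).deriv_eq
    rw [deriv2_comp hτA hφτ, hτ0, hφ1, hφ2'] at h
    exact h
  -- Schwarz bounds
  obtain ⟨hc1le, hc2le⟩ := schwarz_coeff hωd hω0 hωmap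
  obtain ⟨hd1le, hd2le⟩ := schwarz_coeff hτd hτ0 hτmap
  -- key identity
  have key : 2 * (deriv (deriv f) 0)^2
      = (B₁:ℂ) * (deriv (deriv ω) 0 / 2 + (deriv ω 0)^2)
        + 2 * (B₁:ℂ) * (deriv (deriv τ) 0 / 2 + (deriv τ 0)^2)
        + ((B₂:ℂ) - (B₁:ℂ)) * ((deriv ω 0)^2 + 2 * (deriv τ 0)^2) := by
    linear_combination (1/2) * hS2 + hS4 - hA3 + 3 * (deriv (deriv f) 0) * hA2
  -- final bound
  have hnc1 : (0:ℝ) ≤ ‖deriv ω 0‖ := norm_nonneg _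
  have hnd1 : (0:ℝ) ≤ ‖deriv τ 0‖ := norm_nonneg _
  have habs : ‖((B₂:ℂ) - (B₁:ℂ))‖ = |B₂ - B₁| := by
    rw [← Complex.ofReal_sub, Complex.norm_real, Real.norm_eq_abs]
  have hnB : ‖((B₁:ℂ))‖ = B₁ := by
    rw [Complex.norm_real, Real.norm_eq_abs, abs_of_pos hB₁]
  have hbound : ‖2 * (deriv (deriv f) 0)^2‖ ≤ 3 * B₁ + 3 * |B₂ - B₁| := by
    rw [key]
    have t1 : ‖(B₁:ℂ) * (deriv (deriv ω) 0 / 2 + (deriv ω 0)^2)‖ ≤ B₁ := by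
      rw [norm_mul, hnB]
      have : ‖deriv (deriv ω) 0 / 2 + (deriv ω 0)^2‖ ≤ 1 := by
        calc ‖deriv (deriv ω) 0 / 2 + (deriv ω 0)^2‖
            ≤ ‖deriv (deriv ω) 0 / 2‖ + ‖(deriv ω 0)^2‖ := norm_add_le _ _
          _ ≤ (1 - ‖deriv ω 0‖^2) + ‖deriv ω 0‖^2 := by
              rw [norm_pow]
              exact add_le_add hc2le le_rfl
          _ = 1 := by ring
      exact mul_le_of_le_one_right hB₁.le this
    have t2 : ‖2 * (B₁:ℂ) * (deriv (deriv τ) 0 / 2 + (deriv τ 0)^2)‖ ≤ 2 * B₁ := by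
      rw [norm_mul, norm_mul, hnB]
      have h1 : ‖(2:ℂ)‖ = 2 := by norm_num
      rw [h1]
      have : ‖deriv (deriv τ) 0 / 2 + (deriv τ 0)^2‖ ≤ 1 := by
        calc ‖deriv (deriv τ) 0 / 2 + (deriv τ 0)^2‖
            ≤ ‖deriv (deriv τ) 0 / 2‖ + ‖(deriv τ 0)^2‖ := norm_add_le _ _
          _ ≤ (1 - ‖deriv τ 0‖^2) + ‖deriv τ 0‖^2 := by
              rw [norm_pow]
              exact add_le_add hd2le le_rfl
          _ = 1 := by ring
      calc 2 * B₁ * ‖deriv (deriv τ) 0 / 2 + (deriv τ 0)^2‖ ≤ 2 * B₁ * 1 :=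
            mul_le_mul_of_nonneg_left this (by positivity)
        _ = 2 * B₁ := by ring
    have t3 : ‖((B₂:ℂ) - (B₁:ℂ)) * ((deriv ω 0)^2 + 2 * (deriv τ 0)^2)‖ ≤ 3 * |B₂ - B₁| := by
      rw [norm_mul, habs]
      have : ‖(deriv ω 0)^2 + 2 * (deriv τ 0)^2‖ ≤ 3 := by
        calc ‖(deriv ω 0)^2 + 2 * (deriv τ 0)^2‖
            ≤ ‖(deriv ω 0)^2‖ + ‖2 * (deriv τ 0)^2‖ := norm_add_le _ _
          _ ≤ 1 + 2 := by
              rw [norm_pow, norm_mul, norm_pow]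
              have h2 : ‖(2:ℂ)‖ = 2 := by norm_num
              rw [h2]
              have e1 : ‖deriv ω 0‖^2 ≤ 1 := pow_le_one₀ hnc1 hc1le
              have e2 : ‖deriv τ 0‖^2 ≤ 1 := pow_le_one₀ hnd1 hd1le
              linarith [e1, e2]
          _ = 3 := by norm_num
      calc |B₂ - B₁| * ‖(deriv ω 0)^2 + 2 * (deriv τ 0)^2‖ ≤ |B₂ - B₁| * 3 :=
            mul_le_mul_of_nonneg_left this (abs_nonneg _)
        _ = 3 * |B₂ - B₁| := by ring
    calc ‖(B₁:ℂ) * (deriv (deriv ω) 0 / 2 + (deriv ω 0)^2)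
          + 2 * (B₁:ℂ) * (deriv (deriv τ) 0 / 2 + (deriv τ 0)^2)
          + ((B₂:ℂ) - (B₁:ℂ)) * ((deriv ω 0)^2 + 2 * (deriv τ 0)^2)‖
        ≤ ‖(B₁:ℂ) * (deriv (deriv ω) 0 / 2 + (deriv ω 0)^2)
            + 2 * (B₁:ℂ) * (deriv (deriv τ) 0 / 2 + (deriv τ 0)^2)‖
          + ‖((B₂:ℂ) - (B₁:ℂ)) * ((deriv ω 0)^2 + 2 * (deriv τ 0)^2)‖ := norm_add_le _ _
      _ ≤ (‖(B₁:ℂ) * (deriv (deriv ω) 0 / 2 + (deriv ω 0)^2)‖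
            + ‖2 * (B₁:ℂ) * (deriv (deriv τ) 0 / 2 + (deriv τ 0)^2)‖)
          + ‖((B₂:ℂ) - (B₁:ℂ)) * ((deriv ω 0)^2 + 2 * (deriv τ 0)^2)‖ := by
            exact add_le_add (norm_add_le _ _) le_rfl
      _ ≤ (B₁ + 2 * B₁) + 3 * |B₂ - B₁| := by
            exact add_le_add (add_le_add t1 t2) t3
      _ = 3 * B₁ + 3 * |B₂ - B₁| := by ring
  have hf2norm : 2 * ‖deriv (deriv f) 0‖^2 ≤ 3 * B₁ + 3 * |B₂ - B₁| := by
    have : ‖2 * (deriv (deriv f) 0)^2‖ = 2 * ‖deriv (deriv f) 0‖^2 := by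
      rw [norm_mul, norm_pow]
      norm_num
    rwa [this] at hbound
  rw [show iteratedDeriv 2 f 0 = deriv (deriv f) 0 by rw [iteratedDeriv_succ, iteratedDeriv_one]]
  rw [Real.le_sqrt (norm_nonneg _) (by positivity)]
  rw [norm_div]
  have h2 : ‖(2:ℂ)‖ = 2 := by norm_num
  rw [h2, div_pow]
  linarith [hf2norm]
end
end

section
/- Let 0 ≤ β < 1 and let f be bi-univalent with inverse extension F. If Re(1 + zf''(z)/f'(z)) > β on 𝔻 and Re F'(w) > β on 𝔻, then |a₂| ≤ √(3(1−β))/2 and |a₃| ≤ 5(1−β)/6. -/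
open Metric Set Complex

noncomputable section

open MeasureTheory intervalIntegral Real

lemma conj_intInt (h : ℝ → ℂ) (a b : ℝ) :
    (starRingEnd ℂ) (∫ x in a..b, h x) = ∫ x in a..b, (starRingEnd ℂ) (h x) := by
  rw [intervalIntegral, intervalIntegral, integral_conj, integral_conj, map_sub]

lemma re_intInt (h : ℝ → ℂ) (a b : ℝ) (hi : IntervalIntegrable h volume a b) :
    (∫ x in a..b, h x).re = ∫ x in a..b, (h x).re := by
  have h1 := integral_re hi.1
  have h2 := integral_re hi.2
  simp only [RCLike.re_eq_complex_re] at h1 h2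
  rw [intervalIntegral, intervalIntegral, Complex.sub_re, h1, h2]

lemma cara {β : ℝ} {g : ℂ → ℂ}
    (hg : DifferentiableOn ℂ g (ball 0 1)) (hg0 : g 0 = 1)
    (hre : ∀ z ∈ ball (0:ℂ) 1, β < (g z).re) :
    ‖iteratedDeriv 2 g 0‖ ≤ 4 * (1 - β) := by
  have key : ∀ r : ℝ, 0 < r → r < 1 →
      ‖iteratedDeriv 2 g 0‖ * r ^ 2 ≤ 4 * (1 - β) := by
    intro r hr0 hr1
    set e : ℝ → ℂ := circleMap 0 r with he
    have hne : ∀ θ, e θ ≠ 0 := fun θ => circleMap_ne_center hr0.ne'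
    have hce : Continuous e := continuous_circleMap 0 r
    have hmem : ∀ θ, e θ ∈ ball (0:ℂ) 1 := by
      intro θ
      simp only [mem_ball_zero_iff, he]
      rw [norm_circleMap_zero, abs_of_pos hr0]
      exact hr1
    have hgc : Continuous fun θ => g (e θ) :=
      hg.continuousOn.comp_continuous hce hmem
    have hinv : Continuous fun θ => (e θ)⁻¹ := hce.inv₀ hne
    have hsub : closedBall (0:ℂ) r ⊆ ball 0 1 := closedBall_subset_ball hr1
    have hd : DifferentiableOn ℂ g (closedBall (0:ℂ) r) := hg.mono hsub
    have unfold : ∀ h : ℂ → ℂ, (∮ z in C(0, r), h z)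
        = ∫ θ in (0:ℝ)..2*π, (e θ * I) * h (e θ) := by
      intro h
      simp only [circleIntegral, deriv_circleMap, smul_eq_mul, he]
    -- mean value
    have hM : (∫ θ in (0:ℝ)..2*π, g (e θ)) = 2*(π:ℝ) := by
      have h0m : (0:ℂ) ∈ ball (0:ℂ) r := mem_ball_self hr0
      have hh := hd.circleIntegral_sub_inv_smul h0m
      rw [unfold] at hh
      have heq : ∀ θ ∈ uIcc (0:ℝ) (2*π), (e θ * I) * ((e θ - 0)⁻¹ • g (e θ)) = I * g (e θ) := by
        intro θ _
        calc (e θ * I) * ((e θ - 0)⁻¹ • g (e θ))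
            = (e θ * (e θ)⁻¹) * (I * g (e θ)) := by rw [smul_eq_mul, sub_zero]; ring
          _ = I * g (e θ) := by rw [mul_inv_cancel₀ (hne θ), one_mul]
      rw [intervalIntegral.integral_congr heq, intervalIntegral.integral_const_mul,
        hg0, smul_eq_mul, mul_one, show (2:ℂ) * (π:ℝ) * I = I * (2*(π:ℝ)) by ring] at hh
      exact mul_left_cancel₀ I_ne_zero hh
    -- the key coefficient identity
    have hcoef : iteratedDeriv 2 g 0
        = 2 * ((2 * (π:ℝ) * I : ℂ)⁻¹ * ∮ z in C(0, r), ((1:ℂ) / (z - 0)) ^ 2 • (z - 0)⁻¹ • g z) := by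
      lift r to NNReal using hr0.le with r' hr'
      have hps : HasFPowerSeriesOnBall g (cauchyPowerSeries g 0 r') 0 r' :=
        DifferentiableOn.hasFPowerSeriesOnBall hd (by exact_mod_cast hr0)
      have h1 := hps.factorial_smul (y := (1:ℂ)) 2
      rw [cauchyPowerSeries_apply g 0 r' 2 1] at h1
      rw [iteratedDeriv_eq_iteratedFDeriv, ← h1]
      norm_num [smul_eq_mul]
    set J := ∫ θ in (0:ℝ)..2*π, ((e θ)⁻¹)^2 * g (e θ) with hJdef
    have hJ : iteratedDeriv 2 g 0 = J / (π:ℝ) := by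
      rw [hcoef, unfold]
      have heq : ∀ θ ∈ uIcc (0:ℝ) (2*π), (e θ * I) * (((1:ℂ)/(e θ - 0)) ^ 2 • (e θ - 0)⁻¹ • g (e θ))
          = I * (((e θ)⁻¹)^2 * g (e θ)) := by
        intro θ _
        calc (e θ * I) * (((1:ℂ)/(e θ - 0)) ^ 2 • (e θ - 0)⁻¹ • g (e θ))
            = (e θ * (e θ)⁻¹) * (I * (((e θ)⁻¹)^2 * g (e θ))) := by
              rw [smul_eq_mul, smul_eq_mul, sub_zero, one_div]; ring
          _ = I * (((e θ)⁻¹)^2 * g (e θ)) := by rw [mul_inv_cancel₀ (hne θ), one_mul]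
      rw [intervalIntegral.integral_congr heq, intervalIntegral.integral_const_mul, ← hJdef]
      have hpi : ((π:ℝ):ℂ) ≠ 0 := by exact_mod_cast Real.pi_ne_zero
      field_simp
      try simp [Complex.I_sq]
      try ring
    have hK : (∫ θ in (0:ℝ)..2*π, (e θ)^2 * g (e θ)) = 0 := by
      have hzero : (∮ z in C(0, r), z * g z) = 0 := by
        apply Complex.circleIntegral_eq_zero_of_differentiable_on_off_countable hr0.le
          Set.countable_empty (continuousOn_id.mul hd.continuousOn)
        intro z hz
        have hz1 : z ∈ ball (0:ℂ) 1 := ball_subset_ball hr1.le hz.1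
        exact differentiableAt_id.mul (hg.differentiableAt (isOpen_ball.mem_nhds hz1))
      rw [unfold] at hzero
      have heq : ∀ θ ∈ uIcc (0:ℝ) (2*π), (e θ * I) * (e θ * g (e θ))
          = I * ((e θ)^2 * g (e θ)) := by intro θ _; ring
      rw [intervalIntegral.integral_congr heq, intervalIntegral.integral_const_mul] at hzero
      rcases mul_eq_zero.1 hzero with h | h
      · exact absurd h I_ne_zero
      · exact h
    have hrC : ((r:ℝ):ℂ) ≠ 0 := by exact_mod_cast hr0.ne'
    have hconj : ∀ θ, (starRingEnd ℂ) (e θ) = ((r:ℝ):ℂ)^2 * (e θ)⁻¹ := by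
      intro θ
      have h1 : e θ * (starRingEnd ℂ) (e θ) = ((r:ℝ):ℂ)^2 := by
        rw [Complex.mul_conj, Complex.normSq_eq_norm_sq, he, norm_circleMap_zero, abs_of_pos hr0]
        norm_cast
      field_simp [hne θ] at h1 ⊢
      rw [← h1]
    have hKc : (∫ θ in (0:ℝ)..2*π, ((e θ)⁻¹)^2 * (starRingEnd ℂ) (g (e θ))) = 0 := by
      have h2 := conj_intInt (fun θ => (e θ)^2 * g (e θ)) 0 (2*π)
      rw [hK, map_zero] at h2
      have heq : ∀ θ ∈ uIcc (0:ℝ) (2*π), (starRingEnd ℂ) ((e θ)^2 * g (e θ))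
          = ((r:ℝ):ℂ)^4 * (((e θ)⁻¹)^2 * (starRingEnd ℂ) (g (e θ))) := by
        intro θ _
        rw [map_mul, map_pow, hconj θ]
        ring
      rw [intervalIntegral.integral_congr heq, intervalIntegral.integral_const_mul] at h2
      rcases mul_eq_zero.1 h2.symm with h | h
      · exact absurd h (pow_ne_zero 4 hrC)
      · exact h
    have hZ : (∫ θ in (0:ℝ)..2*π, ((e θ)⁻¹ : ℂ)^2) = 0 := by
      have heq : ∀ θ ∈ uIcc (0:ℝ) (2*π), ((e θ)⁻¹:ℂ)^2
          = (((r:ℝ):ℂ)^2)⁻¹ * Complex.exp ((-2*I) * θ) := by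
        intro θ _
        rw [he]
        simp only [circleMap_zero]
        rw [mul_inv, mul_pow, ← Complex.exp_neg]
        rw [show (Complex.exp (-(θ * I)))^2 = Complex.exp ((2:ℕ) * (-(θ * I))) by
          rw [Complex.exp_nat_mul]]
        rw [inv_pow]
        congr 2
        push_cast; ring
      rw [intervalIntegral.integral_congr heq, intervalIntegral.integral_const_mul]
      have hexp : (∫ θ in (0:ℝ)..2*π, Complex.exp ((-2*I) * θ)) = 0 := by
        rw [integral_exp_mul_complex (by simp [Complex.ext_iff] : (-2*I : ℂ) ≠ 0)]
        have h1 : Complex.exp (-2*I*((2*π:ℝ):ℂ)) = 1 := by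
          have h2 := Complex.exp_int_mul_two_pi_mul_I (-2)
          rw [← h2]; congr 1; push_cast; ring
        rw [h1]
        simp
      rw [hexp, mul_zero]
    -- integrability facts
    have hgcc : Continuous fun θ => (starRingEnd ℂ) (g (e θ)) := continuous_star.comp hgc
    have i1 : IntervalIntegrable (fun θ => ((e θ)⁻¹)^2 * g (e θ)) volume 0 (2*π) :=
      ((hinv.pow 2).mul hgc).intervalIntegrable _ _
    have i2 : IntervalIntegrable (fun θ => ((e θ)⁻¹)^2 * (starRingEnd ℂ) (g (e θ))) volume 0 (2*π) :=
      ((hinv.pow 2).mul hgcc).intervalIntegrable _ _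
    have i3 : IntervalIntegrable (fun θ => ((e θ)⁻¹)^2 * (2*(β:ℂ))) volume 0 (2*π) :=
      ((hinv.pow 2).mul continuous_const).intervalIntegrable _ _
    have hsplit : (∫ θ in (0:ℝ)..2*π, ((e θ)⁻¹)^2 * (g (e θ) + (starRingEnd ℂ) (g (e θ)) - 2*(β:ℂ))) = J := by
      have : (fun θ => ((e θ)⁻¹)^2 * (g (e θ) + (starRingEnd ℂ) (g (e θ)) - 2*(β:ℂ)))
          = fun θ => (((e θ)⁻¹)^2 * g (e θ) + ((e θ)⁻¹)^2 * (starRingEnd ℂ) (g (e θ)))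
            - ((e θ)⁻¹)^2 * (2*(β:ℂ)) := by funext θ; ring
      rw [this, intervalIntegral.integral_sub (i1.add i2) i3,
        intervalIntegral.integral_add i1 i2, hKc, add_zero]
      have : (∫ θ in (0:ℝ)..2*π, ((e θ)⁻¹)^2 * (2*(β:ℂ)))
          = (∫ θ in (0:ℝ)..2*π, ((e θ)⁻¹:ℂ)^2) * (2*(β:ℂ)) := intervalIntegral.integral_mul_const _ _
      rw [this, hZ, zero_mul, sub_zero]
    -- the norm bound
    have hre2 : (∫ θ in (0:ℝ)..2*π, (g (e θ)).re) = 2*π := by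
      rw [← re_intInt _ _ _ (hgc.intervalIntegrable _ _), hM]
      simp
    have hb : ‖J‖ ≤ r⁻¹^2 * (4*π*(1-β)) := by
      rw [← hsplit]
      refine le_trans (intervalIntegral.norm_integral_le_integral_norm (by positivity)) ?_
      have hnorm : ∀ θ ∈ uIcc (0:ℝ) (2*π), ‖((e θ)⁻¹)^2 * (g (e θ) + (starRingEnd ℂ) (g (e θ)) - 2*(β:ℂ))‖
          = r⁻¹^2 * (2*(g (e θ)).re - 2*β) := by
        intro θ _
        rw [norm_mul, norm_pow, norm_inv]
        have h1 : ‖e θ‖ = r := by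
          rw [he, norm_circleMap_zero, abs_of_pos hr0]
        rw [h1]
        have h2 : g (e θ) + (starRingEnd ℂ) (g (e θ)) - 2*(β:ℂ)
            = ((2*(g (e θ)).re - 2*β : ℝ) : ℂ) := by
          rw [Complex.add_conj]; push_cast; ring
        rw [h2, Complex.norm_real, Real.norm_eq_abs,
          abs_of_pos (by linarith [hre (e θ) (hmem θ)])]
      rw [intervalIntegral.integral_congr hnorm, intervalIntegral.integral_const_mul]
      have hcont_re : Continuous fun θ => (g (e θ)).re := Complex.continuous_re.comp hgc
      have : (∫ θ in (0:ℝ)..2*π, (2*(g (e θ)).re - 2*β))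
          = 2*(2*π) - 2*β*(2*π) := by
        rw [intervalIntegral.integral_sub ((show Continuous fun θ => 2*(g (e θ)).re from continuous_const.mul hcont_re).intervalIntegrable _ _)
          (continuous_const.intervalIntegrable _ _),
          intervalIntegral.integral_const_mul, hre2, intervalIntegral.integral_const]
        simp
        ring
      rw [this]
      have : 2*(2*π) - 2*β*(2*π) = 4*π*(1-β) := by ring
      rw [this]
    -- conclude
    have hpi : (0:ℝ) < π := Real.pi_pos
    have habs : ‖iteratedDeriv 2 g 0‖ = ‖J‖ / π := by
      rw [hJ, norm_div, Complex.norm_real, Real.norm_of_nonneg hpi.le]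
    rw [habs]
    calc ‖J‖ / π * r ^ 2 ≤ (r⁻¹^2 * (4*π*(1-β))) / π * r ^ 2 := by gcongr
      _ = 4 * (1-β) := by field_simp
  have hlim : Filter.Tendsto (fun r : ℝ => ‖iteratedDeriv 2 g 0‖ * r ^ 2)
      (nhdsWithin 1 (Iio 1)) (nhds (‖iteratedDeriv 2 g 0‖ * 1 ^ 2)) :=
    ((continuous_const.mul (continuous_pow 2)).tendsto 1).mono_left nhdsWithin_le_nhds
  have hev : ∀ᶠ rr in nhdsWithin (1:ℝ) (Iio 1),
      ‖iteratedDeriv 2 g 0‖ * rr ^ 2 ≤ 4 * (1 - β) := by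
    filter_upwards [Ioo_mem_nhdsLT_of_mem (show (1:ℝ) ∈ Ioc (0:ℝ) 1 by norm_num)] with rr hrr
    exact key rr hrr.1 hrr.2
  have hfin := le_of_tendsto hlim hev
  simpa using hfin

lemma AnalyticAt.deriv'' {u : ℂ → ℂ} {z : ℂ} (hu : AnalyticAt ℂ u z) : AnalyticAt ℂ (deriv u) z := by
  obtain ⟨s, hs, h⟩ := hu.eventually_analyticAt.exists_mem
  obtain ⟨t, hts, hto, hzt⟩ := _root_.mem_nhds_iff.1 hs
  exact (AnalyticOnNhd.deriv (fun w hw => h w (hts hw))) z hzt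

lemma deriv_ne_zero {β : ℝ} (hβ1 : β < 1) {f : ℂ → ℂ}
    (hf : DifferentiableOn ℂ f (ball 0 1)) (hf1 : deriv f 0 = 1)
    (hfre : ∀ z ∈ ball (0 : ℂ) 1, β < (1 + z * deriv (deriv f) z / deriv f z).re) :
    ∀ z ∈ ball (0:ℂ) 1, deriv f z ≠ 0 := by
  have hfa : AnalyticOnNhd ℂ f (ball 0 1) := hf.analyticOnNhd isOpen_ball
  have hd1 : AnalyticOnNhd ℂ (deriv f) (ball 0 1) := hfa.deriv
  intro z₀ hz₀ h0
  have h01 : (0:ℂ) ∈ ball (0:ℂ) 1 := by simp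
  have hz00 : z₀ ≠ 0 := by
    intro h; rw [h, hf1] at h0; exact one_ne_zero h0
  have hne : ¬ (∀ᶠ z in nhds z₀, deriv f z = 0) := by
    intro hev
    have heq := hd1.eqOn_of_preconnected_of_eventuallyEq (analyticOnNhd_const (v := (0:ℂ)))
      (convex_ball (0:ℂ) 1).isPreconnected hz₀ hev
    have := heq h01
    rw [hf1] at this
    exact one_ne_zero this
  have ha : AnalyticAt ℂ (deriv f) z₀ := hd1 z₀ hz₀
  have horder : analyticOrderAt (deriv f) z₀ ≠ ⊤ := fun h => hne (analyticOrderAt_eq_top.1 h)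
  obtain ⟨m, hm⟩ := ENat.ne_top_iff_exists.1 horder
  obtain ⟨u, hu, hu0, hev⟩ := (ha.analyticOrderAt_eq_natCast (n := m)).1 hm.symm
  have hm1 : 1 ≤ m := by
    rcases Nat.eq_zero_or_pos m with h | h
    · exfalso
      rw [h] at hev
      have := hev.self_of_nhds
      simp only [pow_zero, one_smul] at this
      rw [h0] at this
      exact hu0 this.symm
    · exact h
  -- the eventual formula for the second derivative
  have hudiff := hu.eventually_analyticAt
  have hev' : deriv f =ᶠ[nhds z₀] fun z => (z - z₀)^m * u z := by
    filter_upwards [hev] with z hz; simpa [smul_eq_mul] using hz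
  have hev2 : ∀ᶠ z in nhds z₀, deriv (deriv f) z
      = (m:ℂ) * (z - z₀)^(m-1) * u z + (z - z₀)^m * deriv u z := by
    filter_upwards [hev'.deriv, hudiff] with z hz hz2
    rw [hz]
    have hder : HasDerivAt (fun w => (w - z₀)^m * u w)
        ((m:ℂ) * (z - z₀)^(m-1) * 1 * u z + (z - z₀)^m * deriv u z) z :=
      (((hasDerivAt_id z).sub_const z₀).pow m).mul hz2.differentiableAt.hasDerivAt
    rw [hder.deriv]; ring
  have huc : ContinuousAt (fun z => ‖z * deriv u z / u z‖) z₀ := by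
    apply continuous_norm.continuousAt.comp
    exact (continuousAt_id.mul hu.deriv''.continuousAt).div hu.continuousAt hu0
  set C : ℝ := ‖z₀ * deriv u z₀ / u z₀‖ + 1 with hC
  have hCpos : 0 ≤ C - 1 := by rw [hC]; simp; positivity
  have hubd : ∀ᶠ z in nhds z₀, ‖z * deriv u z / u z‖ < C :=
    huc.tendsto.eventually_lt_const (by simp [hC])
  have hune : ∀ᶠ z in nhds z₀, u z ≠ 0 := hu.continuousAt.eventually_ne hu0
  -- travel along z₀ * (1 - t)
  have hzt : Filter.Tendsto (fun t : ℝ => z₀ - (t:ℂ) * z₀) (nhdsWithin 0 (Ioi 0)) (nhds z₀) := by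
    have : Filter.Tendsto (fun t : ℝ => z₀ - (t:ℂ) * z₀) (nhds 0) (nhds (z₀ - (0:ℂ) * z₀)) :=
      (continuous_const.sub (Complex.continuous_ofReal.mul continuous_const)).tendsto 0
    simpa using this.mono_left nhdsWithin_le_nhds
  set T : ℝ := min (1/2) (1/(2*(2 + C - β))) with hT
  have hd2 : 0 < 2 + C - β := by linarith
  have hTpos : 0 < T := lt_min (by norm_num) (div_pos one_pos (by linarith))
  have hbig := hzt.eventually (hev'.and (hev2.and (hune.and hubd)))
  have htm : ∀ᶠ t : ℝ in nhdsWithin 0 (Ioi 0), t ∈ Ioo (0:ℝ) T :=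
    Ioo_mem_nhdsGT_of_mem (by simp [hTpos])
  obtain ⟨t, ⟨hfz, hd2z, hunz, hbdz⟩, htT⟩ := (hbig.and htm).exists
  obtain ⟨ht0, htT'⟩ := htT
  have hthalf : t < 1/2 := lt_of_lt_of_le htT' (min_le_left _ _)
  have htsmall : t < 1/(2*(2 + C - β)) := lt_of_lt_of_le htT' (min_le_right _ _)
  set z : ℂ := z₀ - (t:ℂ) * z₀ with hz
  -- z in unit ball
  have hzb : z ∈ ball (0:ℂ) 1 := by
    rw [mem_ball_zero_iff]
    have : z = z₀ * (1 - (t:ℂ)) := by rw [hz]; ring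
    rw [this, norm_mul]
    have h1 : ‖(1 - (t:ℂ))‖ = 1 - t := by
      rw [show (1 - (t:ℂ)) = ((1 - t : ℝ) : ℂ) by push_cast; ring]
      rw [Complex.norm_real, Real.norm_eq_abs, abs_of_pos (by linarith)]
    rw [h1]
    have h2 : ‖z₀‖ < 1 := mem_ball_zero_iff.1 hz₀
    nlinarith [norm_nonneg z₀]
  have hzsub : z - z₀ = -(t:ℂ) * z₀ := by rw [hz]; ring
  have hzsubne : z - z₀ ≠ 0 := by
    rw [hzsub]
    apply mul_ne_zero _ hz00
    simp only [neg_ne_zero, ne_eq, Complex.ofReal_eq_zero]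
    exact ht0.ne'
  -- compute the quotient
  have hkey : z * deriv (deriv f) z / deriv f z
      = -(((m:ℝ) * (1 - t) / t : ℝ) : ℂ) + z * deriv u z / u z := by
    rw [hd2z, hfz]
    obtain ⟨k, hk⟩ : ∃ k, m = k + 1 := ⟨m - 1, by omega⟩
    have hms : (m : ℂ) ≠ 0 := Nat.cast_ne_zero.2 (by omega)
    have hpow : (z - z₀)^m = (z - z₀)^(m-1) * (z - z₀) := by
      rw [hk]; simp [pow_succ]
    have e1 : z * ((m:ℂ) * (z - z₀)^(m-1) * u z + (z - z₀)^m * deriv u z) / ((z - z₀)^m * u z)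
        = z * (m:ℂ) / (z - z₀) + z * deriv u z / u z := by
      rw [hpow]
      field_simp
    rw [e1]
    congr 1
    rw [hzsub]
    rw [show z = z₀ * (1 - (t:ℂ)) by rw [hz]; ring]
    have htC : (t:ℂ) ≠ 0 := by exact_mod_cast ht0.ne'
    field_simp
    push_cast
    linear_combination ((m:ℂ) - (t:ℂ) * (m:ℂ)) * (mul_inv_cancel₀ htC)
  -- derive contradiction
  have hval := hfre z hzb
  rw [hkey] at hval
  simp only [Complex.add_re, Complex.one_re, Complex.neg_re, Complex.ofReal_re] at hval
  have hrebd : (z * deriv u z / u z).re ≤ C := le_of_lt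
    (lt_of_le_of_lt (le_trans (le_abs_self _) (Complex.abs_re_le_norm _)) hbdz)
  have hfrac : 1/(2*t) ≤ (m:ℝ) * (1 - t) / t := by
    rw [div_le_div_iff₀ (by linarith) ht0]
    have hm1' : (1:ℝ) ≤ (m:ℝ) := by exact_mod_cast hm1
    have h1t : (1:ℝ)/2 ≤ 1 - t := by linarith
    have hmm : (1:ℝ)/2 ≤ (m:ℝ) * (1 - t) := by nlinarith
    nlinarith
  have hbig2 : 2 + C - β < 1/(2*t) := by
    have h2t : (0:ℝ) < 2*t := by linarith
    rw [lt_div_iff₀ h2t]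
    have hmul := mul_lt_mul_of_pos_right htsmall (show (0:ℝ) < 2*(2+C-β) by linarith)
    rw [div_mul_cancel₀ _ (show (2*(2+C-β)) ≠ 0 by linarith)] at hmul
    nlinarith
  linarith

theorem stmt13 (β : ℝ) (hβ0 : 0 ≤ β) (hβ1 : β < 1)
    (f F : ℂ → ℂ)
    (hf : DifferentiableOn ℂ f (ball 0 1)) (hf0 : f 0 = 0) (hf1 : deriv f 0 = 1)
    (hfi : InjOn f (ball 0 1))
    (hF : DifferentiableOn ℂ F (ball 0 1)) (hF0 : F 0 = 0) (hFi : InjOn F (ball 0 1))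
    (hFf : ∀ᶠ z in nhds (0 : ℂ), F (f z) = z)
    (hfre : ∀ z ∈ ball (0 : ℂ) 1, β < (1 + z * deriv (deriv f) z / deriv f z).re)
    (hFre : ∀ w ∈ ball (0 : ℂ) 1, β < (deriv F w).re) :
    ‖iteratedDeriv 2 f 0 / 2‖ ≤ Real.sqrt (3 * (1 - β)) / 2 ∧ ‖iteratedDeriv 3 f 0 / 6‖ ≤ 5 * (1 - β) / 6 := by
  have h01 : (0:ℂ) ∈ ball (0:ℂ) 1 := by simp
  have hball : ∀ᶠ z in nhds (0:ℂ), z ∈ ball (0:ℂ) 1 := isOpen_ball.mem_nhds h01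
  have hfa : AnalyticOnNhd ℂ f (ball 0 1) := hf.analyticOnNhd isOpen_ball
  have hFa : AnalyticOnNhd ℂ F (ball 0 1) := hF.analyticOnNhd isOpen_ball
  have hd1 : AnalyticOnNhd ℂ (deriv f) (ball 0 1) := hfa.deriv
  have hd2 : AnalyticOnNhd ℂ (deriv (deriv f)) (ball 0 1) := hd1.deriv
  have hd3 : AnalyticOnNhd ℂ (deriv (deriv (deriv f))) (ball 0 1) := hd2.deriv
  have hq : AnalyticOnNhd ℂ (deriv F) (ball 0 1) := hFa.deriv
  have hq1 : AnalyticOnNhd ℂ (deriv (deriv F)) (ball 0 1) := hq.deriv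
  have hDne : ∀ z ∈ ball (0:ℂ) 1, deriv f z ≠ 0 := deriv_ne_zero hβ1 hf hf1 hfre
  have hD10 : deriv f 0 ≠ 0 := by rw [hf1]; exact one_ne_zero
  -- abbreviations
  set a : ℂ := deriv (deriv f) 0 with ha
  set b : ℂ := deriv (deriv (deriv f)) 0 with hb
  -- f has nice iterated derivs
  have hiter2 : iteratedDeriv 2 f 0 = a := by
    rw [show (2:ℕ) = 1 + 1 from rfl, iteratedDeriv_succ, iteratedDeriv_one]
  have hiter3 : iteratedDeriv 3 f 0 = b := by
    rw [show (3:ℕ) = 2 + 1 from rfl, iteratedDeriv_succ,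
      show (2:ℕ) = 1 + 1 from rfl, iteratedDeriv_succ, iteratedDeriv_one]
  ----------------------------------------------------------------
  -- p side
  ----------------------------------------------------------------
  set p : ℂ → ℂ := fun z => 1 + z * deriv (deriv f) z / deriv f z with hp
  set h : ℂ → ℂ := fun z => deriv (deriv f) z / deriv f z with hh
  have hpeq : p = fun z => 1 + z * h z := by
    funext z; rw [hp, hh]; simp [mul_div_assoc]
  have hhd : ∀ z ∈ ball (0:ℂ) 1, DifferentiableAt ℂ h z := fun z hz =>
    ((hd2 z hz).differentiableAt).div ((hd1 z hz).differentiableAt) (hDne z hz)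
  have hpdiff : DifferentiableOn ℂ p (ball 0 1) := by
    intro z hz
    rw [hpeq]
    exact ((differentiableAt_const _).add (differentiableAt_id.mul (hhd z hz))).differentiableWithinAt
  have hp0 : p 0 = 1 := by rw [hp]; simp
  have hcara_p := cara hpdiff hp0 hfre
  -- compute iteratedDeriv 2 p 0
  have hh0 : AnalyticAt ℂ h 0 := (hd2 0 h01).div (hd1 0 h01) hD10
  have hderp : ∀ᶠ z in nhds (0:ℂ), deriv p z = h z + z * deriv h z := by
    filter_upwards [hball] with z hz
    have hdz : HasDerivAt (fun w => 1 + w * h w) (1 * h z + z * deriv h z) z :=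
      ((hasDerivAt_id z).mul (hhd z hz).hasDerivAt).const_add 1
    rw [hpeq, hdz.deriv]; ring
  have hdh0 : DifferentiableAt ℂ (deriv h) 0 := hh0.deriv''.differentiableAt
  have hp2 : iteratedDeriv 2 p 0 = 2 * deriv h 0 := by
    rw [show (2:ℕ) = 1 + 1 from rfl, iteratedDeriv_succ, iteratedDeriv_one]
    rw [Filter.EventuallyEq.deriv_eq hderp]
    have hsum : HasDerivAt (fun z => h z + z * deriv h z)
        (deriv h 0 + (1 * deriv h 0 + 0 * deriv (deriv h) 0)) 0 :=
      (hh0.differentiableAt.hasDerivAt).add ((hasDerivAt_id 0).mul hdh0.hasDerivAt)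
    rw [hsum.deriv]; ring
  have hdh0v : deriv h 0 = b - a^2 := by
    rw [hh, deriv_fun_div ((hd2 0 h01).differentiableAt) ((hd1 0 h01).differentiableAt) hD10]
    rw [hf1, ← ha, ← hb]
    simp
    ring
  have hP : ‖2 * (b - a^2)‖ ≤ 4 * (1 - β) := by
    rw [← hdh0v, ← hp2]; exact hcara_p
  ----------------------------------------------------------------
  -- q side
  ----------------------------------------------------------------
  set q : ℂ → ℂ := deriv F with hqdef
  have hqdiff : DifferentiableOn ℂ q (ball 0 1) := hq.differentiableOn
  have hfball : ∀ᶠ z in nhds (0:ℂ), f z ∈ ball (0:ℂ) 1 := by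
    have hfc : ContinuousAt f 0 := (hf.differentiableAt (isOpen_ball.mem_nhds h01)).continuousAt
    have := hfc.preimage_mem_nhds (isOpen_ball.mem_nhds (by rw [hf0]; exact h01))
    filter_upwards [this] with z hz using hz
  have hFf' : (fun z => F (f z)) =ᶠ[nhds (0:ℂ)] id := hFf
  have E0 : (fun z => q (f z) * deriv f z) =ᶠ[nhds (0:ℂ)] (fun _ => 1) := by
    filter_upwards [hFf'.deriv, hball, hfball] with z h1z hz hfz
    have hcomp : deriv (fun z => F (f z)) z = deriv F (f z) * deriv f z :=
      deriv_comp z (hF.differentiableAt (isOpen_ball.mem_nhds hfz))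
        (hf.differentiableAt (isOpen_ball.mem_nhds hz))
    rw [hqdef, ← hcomp, h1z, deriv_id]
  have hq00 : q 0 = 1 := by
    have := E0.self_of_nhds
    simp only [hf0, hf1, mul_one] at this
    exact this
  have E1 : (fun z => deriv q (f z) * deriv f z * deriv f z + q (f z) * deriv (deriv f) z)
      =ᶠ[nhds (0:ℂ)] (fun _ => 0) := by
    have hE0d := E0.deriv
    filter_upwards [hE0d, hball, hfball] with z h1z hz hfz
    have hfd : HasDerivAt f (deriv f z) z :=
      (hf.differentiableAt (isOpen_ball.mem_nhds hz)).hasDerivAt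
    have hqd : HasDerivAt q (deriv q (f z)) (f z) :=
      (hq (f z) hfz).differentiableAt.hasDerivAt
    have hcomp : HasDerivAt (fun z => q (f z)) (deriv q (f z) * deriv f z) z := hqd.comp z hfd
    have hD1d : HasDerivAt (deriv f) (deriv (deriv f) z) z :=
      (hd1 z hz).differentiableAt.hasDerivAt
    have htot : HasDerivAt (fun z => q (f z) * deriv f z)
        (deriv q (f z) * deriv f z * deriv f z + q (f z) * deriv (deriv f) z) z :=
      hcomp.mul hD1d
    rw [← htot.deriv, h1z, deriv_const]
  have hq10 : deriv q 0 = -a := by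
    have := E1.self_of_nhds
    simp only [hf0, hf1, hq00, mul_one, one_mul] at this
    linear_combination this
  -- differentiate E1 at 0
  have hq20 : deriv (deriv q) 0 = 3 * a^2 - b := by
    have hder0 := Filter.EventuallyEq.deriv_eq E1
    rw [deriv_const] at hder0
    -- compute the derivative of the LHS at 0
    have hf00 : f 0 ∈ ball (0:ℂ) 1 := by rw [hf0]; exact h01
    have hfd : HasDerivAt f (deriv f 0) 0 :=
      (hf.differentiableAt (isOpen_ball.mem_nhds h01)).hasDerivAt
    have hqd : HasDerivAt q (deriv q (f 0)) (f 0) :=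
      (hq (f 0) hf00).differentiableAt.hasDerivAt
    have hq1d : HasDerivAt (deriv q) (deriv (deriv q) (f 0)) (f 0) :=
      (hq1 (f 0) hf00).differentiableAt.hasDerivAt
    have hcompq : HasDerivAt (fun z => q (f z)) (deriv q (f 0) * deriv f 0) 0 := hqd.comp 0 hfd
    have hcompq1 : HasDerivAt (fun z => deriv q (f z)) (deriv (deriv q) (f 0) * deriv f 0) 0 :=
      hq1d.comp 0 hfd
    have hD1d : HasDerivAt (deriv f) (deriv (deriv f) 0) 0 :=
      (hd1 0 h01).differentiableAt.hasDerivAt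
    have hD2d : HasDerivAt (deriv (deriv f)) (deriv (deriv (deriv f)) 0) 0 :=
      (hd2 0 h01).differentiableAt.hasDerivAt
    have htot : HasDerivAt
        (fun z => deriv q (f z) * deriv f z * deriv f z + q (f z) * deriv (deriv f) z)
        ((deriv (deriv q) (f 0) * deriv f 0 * deriv f 0 + deriv q (f 0) * deriv (deriv f) 0)
            * deriv f 0 + deriv q (f 0) * deriv f 0 * deriv (deriv f) 0
          + (deriv q (f 0) * deriv f 0 * deriv (deriv f) 0 + q (f 0) * deriv (deriv (deriv f)) 0)) 0 :=
      ((hcompq1.mul hD1d).mul hD1d).add (hcompq.mul hD2d)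
    rw [htot.deriv, hf0, hf1, hq00, hq10, ← ha, ← hb] at hder0
    simp only [mul_one, one_mul] at hder0
    linear_combination hder0
  have hcara_q := cara hqdiff hq00 hFre
  have hq2iter : iteratedDeriv 2 q 0 = 3 * a^2 - b := by
    rw [show iteratedDeriv 2 q 0 = deriv (deriv q) 0 by
      rw [show (2:ℕ) = 1 + 1 from rfl, iteratedDeriv_succ, iteratedDeriv_one], hq20]
  have hQ : ‖3 * a^2 - b‖ ≤ 4 * (1 - β) := by rw [← hq2iter]; exact hcara_q
  ----------------------------------------------------------------
  -- final algebra
  ----------------------------------------------------------------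
  have hPa : ‖b - a^2‖ ≤ 2 * (1 - β) := by
    have : ‖2 * (b - a^2)‖ = 2 * ‖b - a^2‖ := by
      rw [norm_mul]; simp
    rw [this] at hP; linarith
  have hasq : ‖a‖ ^ 2 ≤ 3 * (1 - β) := by
    have h2 : (2:ℂ) * a^2 = (b - a^2) + (3*a^2 - b) := by ring
    have := norm_add_le (b - a^2) (3*a^2 - b)
    rw [← h2] at this
    rw [norm_mul] at this
    simp only [Complex.norm_two] at this
    have h3 : ‖a^2‖ = ‖a‖ ^ 2 := by rw [norm_pow]
    nlinarith [norm_nonneg a]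
  have hbbd : ‖b‖ ≤ 5 * (1 - β) := by
    have h2 : (2:ℂ) * b = 3 * (b - a^2) + (3*a^2 - b) := by ring
    have := norm_add_le (3 * (b - a^2)) (3*a^2 - b)
    rw [← h2] at this
    rw [norm_mul, norm_mul] at this
    simp only [Complex.norm_two, Complex.norm_ofNat] at this
    nlinarith
  constructor
  · rw [hiter2, norm_div, Complex.norm_two]
    have h1 : ‖a‖ ≤ Real.sqrt (3 * (1 - β)) := by
      have := Real.sqrt_le_sqrt hasq
      rwa [Real.sqrt_sq (norm_nonneg a)] at this
    linarith
  · rw [hiter3, norm_div]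
    have h6 : ‖(6:ℂ)‖ = 6 := by
      rw [show (6:ℂ) = ((6:ℝ):ℂ) by norm_num, Complex.norm_real]; norm_num
    rw [h6]
    linarith
end
end
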